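/- arXiv:2104.00434 — 5 statements merged into one kernel-verified Lean document; each statement's English description precedes it below -/
import Mathlib

section
/- Let m ≥ 1 and n ≥ 0 be integers. Let D be a finite group containing an abelian subgroup A of index 2 with A ≅ (ℤ/3)^m × ℤ/2, and suppose there exists x ∈ D with x ∉ A such that x² = t, where t is the unique element of order 2 in A, and x⁻¹ a x = a⁻¹ for all a ∈ A (so that D is the generalized dicyclic group Dic((ℤ/3)^m × ℤ/2)). Then the direct product D × (ℤ/2)^n has property (P). -/
/-- A finite group `G` has property (P) if it has even order and for all `x y : G`
with `x` of order 2, the subgroup generated by `x` and `y` is isomorphic to one of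
`ℤ/2`, `ℤ/2 × ℤ/2`, `ℤ/4`, `ℤ/6`, `ℤ/2 × ℤ/4`, `ℤ/2 × ℤ/6` or `A₄`. -/
def PropertyP (G : Type*) [Group G] : Prop :=
  Even (Nat.card G) ∧
  ∀ x y : G, orderOf x = 2 →
    Nonempty (↥(Subgroup.closure {x, y}) ≃* Multiplicative (ZMod 2)) ∨
    Nonempty (↥(Subgroup.closure {x, y}) ≃*
      Multiplicative (ZMod 2) × Multiplicative (ZMod 2)) ∨
    Nonempty (↥(Subgroup.closure {x, y}) ≃* Multiplicative (ZMod 4)) ∨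
    Nonempty (↥(Subgroup.closure {x, y}) ≃* Multiplicative (ZMod 6)) ∨
    Nonempty (↥(Subgroup.closure {x, y}) ≃*
      Multiplicative (ZMod 2) × Multiplicative (ZMod 4)) ∨
    Nonempty (↥(Subgroup.closure {x, y}) ≃*
      Multiplicative (ZMod 2) × Multiplicative (ZMod 6)) ∨
    Nonempty (↥(Subgroup.closure {x, y}) ≃* alternatingGroup (Fin 4))

section Aux

open Subgroup

private def zmodPow {G : Type*} [Group G] (g : G) (k : ℕ) [NeZero k] (hg : orderOf g = k) :
    Multiplicative (ZMod k) →* G where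
  toFun a := g ^ (Multiplicative.toAdd a).val
  map_one' := by simp
  map_mul' a b := by
    subst hg
    show g ^ ((Multiplicative.toAdd a + Multiplicative.toAdd b).val) = _
    rw [ZMod.val_add, pow_mod_orderOf, pow_add]

private lemma zmodPow_apply {G : Type*} [Group G] (g : G) (k : ℕ) [NeZero k]
    (hg : orderOf g = k) (a : Multiplicative (ZMod k)) :
    zmodPow g k hg a = g ^ (Multiplicative.toAdd a).val := rfl

private lemma val_eq_zero_of_pow {G : Type*} [Group G] {g : G} {k : ℕ} [NeZero k]
    (hg : orderOf g = k) (a : ZMod k) (ha : g ^ a.val = 1) : a = 0 := by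
  have hd : orderOf g ∣ a.val := orderOf_dvd_of_pow_eq_one ha
  rw [hg] at hd
  have hlt : a.val < k := ZMod.val_lt _
  have h0 : a.val = 0 := Nat.eq_zero_of_dvd_of_lt hd hlt
  exact (ZMod.val_eq_zero _).mp h0

private lemma zmodPow_inj {G : Type*} [Group G] (g : G) (k : ℕ) [NeZero k]
    (hg : orderOf g = k) : Function.Injective (zmodPow g k hg) := by
  rw [injective_iff_map_eq_one]
  intro a ha
  have := val_eq_zero_of_pow hg (Multiplicative.toAdd a) ha
  simpa using this

private lemma zmodPow_range {G : Type*} [Group G] (g : G) (k : ℕ) [NeZero k]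
    (hk : 1 < k) (hg : orderOf g = k) : (zmodPow g k hg).range = zpowers g := by
  haveI : Fact (1 < k) := ⟨hk⟩
  apply le_antisymm
  · rintro w ⟨a, rfl⟩
    exact pow_mem (mem_zpowers g) _
  · rw [zpowers_le]
    refine ⟨Multiplicative.ofAdd 1, ?_⟩
    rw [zmodPow_apply]
    simp [ZMod.val_one]

private lemma iso_of_hom {G M : Type*} [Group G] [Group M] (φ : M →* G) (H : Subgroup G)
    (hinj : Function.Injective φ) (hmem : ∀ a, φ a ∈ H)
    (hsurj : ∀ w ∈ H, ∃ a, φ a = w) : Nonempty (↥H ≃* M) := by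
  have hbij : Function.Bijective (φ.codRestrict H hmem) := by
    constructor
    · intro a b hab
      exact hinj (congrArg Subtype.val hab)
    · rintro ⟨w, hw⟩
      obtain ⟨a, ha⟩ := hsurj w hw
      exact ⟨a, Subtype.ext ha⟩
  exact ⟨(MulEquiv.ofBijective _ hbij).symm⟩

/-- the cyclic case -/
private lemma cyclic_case {G : Type*} [Group G] (s : Set G) (g : G) (k : ℕ) (hk : 1 < k)
    (hg : orderOf g = k) (hs : Subgroup.closure s = zpowers g) :
    Nonempty (↥(Subgroup.closure s) ≃* Multiplicative (ZMod k)) := by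
  haveI : NeZero k := ⟨by omega⟩
  have hrange : Subgroup.closure s = (zmodPow g k hg).range :=
    hs.trans (zmodPow_range g k hk hg).symm
  refine iso_of_hom (zmodPow g k hg) _ (zmodPow_inj g k hg) ?_ ?_
  · intro a
    rw [hrange]
    exact ⟨a, rfl⟩
  · intro w hw
    rw [hrange] at hw
    exact hw

/-- the non-cyclic case -/
private lemma noncyclic_case {G : Type*} [Group G] (z y : G) (hz : orderOf z = 2)
    (hc : Commute z y) (k : ℕ) (hk : 1 < k) (hy : orderOf y = k)
    (hzy : z ∉ zpowers y) :
    Nonempty (↥(Subgroup.closure {z, y}) ≃*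
      Multiplicative (ZMod 2) × Multiplicative (ZMod k)) := by
  haveI : NeZero k := ⟨by omega⟩
  haveI : Fact (1 < k) := ⟨hk⟩
  have hcomm : ∀ (a : Multiplicative (ZMod 2)) (b : Multiplicative (ZMod k)),
      Commute ((zmodPow z 2 hz) a) ((zmodPow y k hy) b) := by
    intro a b
    rw [zmodPow_apply, zmodPow_apply]
    exact hc.pow_pow _ _
  have happly : ∀ (a : Multiplicative (ZMod 2)) (b : Multiplicative (ZMod k)),
      (MonoidHom.noncommCoprod (zmodPow z 2 hz) (zmodPow y k hy) hcomm) (a, b) =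
        z ^ (Multiplicative.toAdd a).val * y ^ (Multiplicative.toAdd b).val := by
    intro a b
    rw [MonoidHom.noncommCoprod_apply, zmodPow_apply, zmodPow_apply]
  have hzmem : z ∈ Subgroup.closure {z, y} := Subgroup.subset_closure (Set.mem_insert z {y})
  have hymem : y ∈ Subgroup.closure {z, y} :=
    Subgroup.subset_closure (Set.mem_insert_of_mem z rfl)
  refine iso_of_hom (MonoidHom.noncommCoprod (zmodPow z 2 hz) (zmodPow y k hy) hcomm) _
    ?_ ?_ ?_
  · rw [injective_iff_map_eq_one]
    rintro ⟨a, b⟩ hab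
    rw [happly] at hab
    have hval : (Multiplicative.toAdd a).val < 2 := ZMod.val_lt _
    have hza : z ^ (Multiplicative.toAdd a).val = (y ^ (Multiplicative.toAdd b).val)⁻¹ :=
      eq_inv_of_mul_eq_one_left hab
    have ha0 : (Multiplicative.toAdd a).val = 0 := by
      rcases (by omega :
          (Multiplicative.toAdd a).val = 0 ∨ (Multiplicative.toAdd a).val = 1) with h | h
      · exact h
      · exfalso
        apply hzy
        rw [← pow_one z, ← h, hza]
        exact inv_mem (pow_mem (mem_zpowers y) _)
    have ha : a = 1 := by
      have := (ZMod.val_eq_zero _).mp ha0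
      simpa using this
    have hb : b = 1 := by
      rw [ha0, pow_zero, one_mul] at hab
      have := val_eq_zero_of_pow hy (Multiplicative.toAdd b) hab
      simpa using this
    rw [ha, hb]
    rfl
  · rintro ⟨a, b⟩
    rw [happly]
    exact mul_mem (pow_mem hzmem _) (pow_mem hymem _)
  · intro w hw
    have hle : Subgroup.closure {z, y} ≤
        (MonoidHom.noncommCoprod (zmodPow z 2 hz) (zmodPow y k hy) hcomm).range := by
      rw [Subgroup.closure_le]
      rintro w (rfl | rfl)
      · refine ⟨(Multiplicative.ofAdd 1, 1), ?_⟩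
        rw [happly]
        simp [ZMod.val_one]
      · refine ⟨(1, Multiplicative.ofAdd 1), ?_⟩
        rw [happly]
        simp [ZMod.val_one]
    exact hle hw

end Aux

/-- if `D` is a finite group containing an abelian subgroup `A` of
index 2 with `A ≅ (ℤ/3)^m × ℤ/2` and an element `x ∉ A` with `x² = t` the unique
involution of `A` and `x⁻¹ax = a⁻¹` for all `a ∈ A` (so `D = Dic((ℤ/3)^m × ℤ/2)`),
then `D × (ℤ/2)^n` has property (P). -/
theorem stmt13 (m n : ℕ) (hm : 1 ≤ m) (D : Type*) [Group D] [Finite D]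
    (A : Subgroup D) (hA : A.index = 2)
    (hiso : Nonempty (↥A ≃* (Fin m → Multiplicative (ZMod 3)) × Multiplicative (ZMod 2)))
    (t : D) (ht : t ∈ A) (ht2 : orderOf t = 2)
    (htuniq : ∀ s ∈ A, orderOf s = 2 → s = t)
    (x : D) (hx : x ∉ A) (hx2 : x ^ 2 = t)
    (hconj : ∀ a ∈ A, x⁻¹ * a * x = a⁻¹) :
    PropertyP (D × (Fin n → Multiplicative (ZMod 2))) := by
  classical
  obtain ⟨f⟩ := hiso
  set E := Fin n → Multiplicative (ZMod 2) with hE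
  -- basic facts
  have ht1 : t ≠ 1 := by
    intro h; rw [h, orderOf_one] at ht2; omega
  have htt : t * t = 1 := by
    have := pow_orderOf_eq_one t; rw [ht2, pow_two] at this; exact this
  have htinv : t⁻¹ = t := by
    rw [← mul_eq_one_iff_inv_eq]; exact htt
  -- A is commutative
  have hAcomm : ∀ a b : D, a ∈ A → b ∈ A → a * b = b * a := by
    intro a b ha hb
    have : (⟨a, ha⟩ : A) * ⟨b, hb⟩ = ⟨b, hb⟩ * ⟨a, ha⟩ := by
      apply f.injective
      rw [map_mul, map_mul, mul_comm]
    exact Subtype.ext_iff.mp this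
  -- every element outside A is x * a for a ∈ A
  have hout : ∀ d : D, d ∉ A → x⁻¹ * d ∈ A := by
    intro d hd
    rw [Subgroup.mul_mem_iff_of_index_two hA]
    have hxinv : x⁻¹ ∉ A := fun h => hx (by simpa using A.inv_mem h)
    simp [hxinv, hd]
  -- x and t commute
  have hxt : t * x = x * t := by
    have := hconj t ht
    rw [htinv] at this
    calc t * x = x * (x⁻¹ * t * x) := by group
    _ = x * t := by rw [this]
  -- t is central in D
  have htcent : ∀ g : D, t * g = g * t := by
    intro g
    by_cases hg : g ∈ A
    · exact hAcomm t g ht hg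
    · have ha : x⁻¹ * g ∈ A := hout g hg
      have key : t * (x * (x⁻¹ * g)) = (x * (x⁻¹ * g)) * t := by
        rw [← mul_assoc t x, hxt, mul_assoc x t, hAcomm t _ ht ha]
        exact (mul_assoc _ _ _).symm
      calc t * g = t * (x * (x⁻¹ * g)) := by rw [mul_inv_cancel_left]
      _ = (x * (x⁻¹ * g)) * t := key
      _ = g * t := by rw [mul_inv_cancel_left]
  -- elements outside A square to t
  have hsq : ∀ d : D, d ∉ A → d ^ 2 = t := by
    intro d hd
    have ha : x⁻¹ * d ∈ A := hout d hd
    have hax : (x⁻¹ * d) * x = x * (x⁻¹ * d)⁻¹ := by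
      have h := hconj _ ha
      calc (x⁻¹ * d) * x = x * (x⁻¹ * (x⁻¹ * d) * x) := by group
      _ = x * (x⁻¹ * d)⁻¹ := by rw [h]
    calc d ^ 2 = d * d := pow_two d
    _ = x * ((x⁻¹ * d) * x) * (x⁻¹ * d) := by group
    _ = x * (x * (x⁻¹ * d)⁻¹) * (x⁻¹ * d) := by rw [hax]
    _ = x * x := by group
    _ = x ^ 2 := (pow_two x).symm
    _ = t := hx2
  -- all elements of A have order dividing 6
  have hA6 : ∀ a : D, a ∈ A → a ^ 6 = 1 := by
    intro a ha
    have h6 : ∀ v : (Fin m → Multiplicative (ZMod 3)) × Multiplicative (ZMod 2),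
        v ^ 6 = 1 := by
      intro v
      have h3 : ∀ w : Multiplicative (ZMod 3), w ^ 6 = 1 := by decide
      have h2 : ∀ w : Multiplicative (ZMod 2), w ^ 6 = 1 := by decide
      refine Prod.ext ?_ ?_
      · show (v.1 ^ 6) = 1
        funext i
        exact h3 (v.1 i)
      · exact h2 v.2
    have : (⟨a, ha⟩ : A) ^ 6 = 1 := by
      apply f.injective
      rw [map_pow, map_one]
      exact h6 _
    have := Subtype.ext_iff.mp this
    simpa using this
  -- all elements of E square to 1
  have hE2 : ∀ e : E, e ^ 2 = 1 := by
    intro e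
    funext i
    have h2 : ∀ w : Multiplicative (ZMod 2), w ^ 2 = 1 := by decide
    exact h2 (e i)
  constructor
  · -- even order
    have hcard : Nat.card D = 2 * Nat.card A := by
      rw [← A.index_mul_card, hA]
    rw [Nat.card_prod, hcard]
    exact ⟨Nat.card A * Nat.card E, by ring⟩
  · intro z y hz2
    have hzsq : z ^ 2 = 1 := by
      have := pow_orderOf_eq_one z; rwa [hz2] at this
    -- first component of z is 1 or t
    have hz1 : z.1 = 1 ∨ z.1 = t := by
      have hz1sq : z.1 ^ 2 = 1 := by
        have : (z ^ 2).1 = (1 : D × E).1 := by rw [hzsq]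
        simpa using this
      by_cases hmem : z.1 ∈ A
      · by_cases h1 : z.1 = 1
        · exact Or.inl h1
        · right
          refine htuniq z.1 hmem ?_
          haveI : Fact (Nat.Prime 2) := ⟨Nat.prime_two⟩
          exact orderOf_eq_prime hz1sq h1
      · exfalso
        have := hsq z.1 hmem
        rw [hz1sq] at this
        exact ht1 this.symm
    -- z is central
    have hzcent : ∀ w : D × E, Commute z w := by
      intro w
      have h1 : z.1 * w.1 = w.1 * z.1 := by
        rcases hz1 with h | h
        · rw [h, one_mul, mul_one]
        · rw [h]; exact htcent w.1
      have h2 : z.2 * w.2 = w.2 * z.2 := mul_comm _ _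
      show z * w = w * z
      exact Prod.ext h1 h2
    have hc : Commute z y := hzcent y
    -- order of y divides 4 or 6
    have hk46 : orderOf y ∣ 4 ∨ orderOf y ∣ 6 := by
      by_cases hy1 : y.1 ∈ A
      · right
        apply orderOf_dvd_of_pow_eq_one
        refine Prod.ext ?_ ?_
        · show y.1 ^ 6 = 1
          exact hA6 y.1 hy1
        · show y.2 ^ 6 = 1
          calc y.2 ^ 6 = (y.2 ^ 2) ^ 3 := by rw [← pow_mul]
          _ = 1 := by rw [hE2 y.2]; simp
      · left
        apply orderOf_dvd_of_pow_eq_one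
        refine Prod.ext ?_ ?_
        · show y.1 ^ 4 = 1
          calc y.1 ^ 4 = (y.1 ^ 2) ^ 2 := by rw [← pow_mul]
          _ = t ^ 2 := by rw [hsq y.1 hy1]
          _ = 1 := by rw [pow_two]; exact htt
        · show y.2 ^ 4 = 1
          calc y.2 ^ 4 = (y.2 ^ 2) ^ 2 := by rw [← pow_mul]
          _ = 1 := by rw [hE2 y.2]; simp
    by_cases hzin : z ∈ Subgroup.zpowers y
    · -- cyclic case generated by y
      have hclos : Subgroup.closure {z, y} = Subgroup.zpowers y := by
        apply le_antisymm
        · rw [Subgroup.closure_le]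
          rintro w hw
          rcases Set.mem_insert_iff.mp hw with h | h
          · rw [h]; exact hzin
          · rw [Set.mem_singleton_iff.mp h]; exact Subgroup.mem_zpowers y
        · rw [Subgroup.zpowers_le]
          exact Subgroup.subset_closure (Set.mem_insert_of_mem _ rfl)
      have h2k := orderOf_dvd_of_mem_zpowers hzin
      rw [hz2] at h2k
      have hk : orderOf y = 2 ∨ orderOf y = 4 ∨ orderOf y = 6 := by
        rcases hk46 with h | h
        · have := Nat.le_of_dvd (by norm_num) h
          interval_cases h' : orderOf y <;> omega
        · have := Nat.le_of_dvd (by norm_num) h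
          interval_cases h' : orderOf y <;> omega
      rcases hk with hk | hk | hk
      · exact Or.inl (cyclic_case _ y 2 (by norm_num) hk hclos)
      · exact Or.inr (Or.inr (Or.inl (cyclic_case _ y 4 (by norm_num) hk hclos)))
      · exact Or.inr (Or.inr (Or.inr (Or.inl (cyclic_case _ y 6 (by norm_num) hk hclos))))
    · by_cases hyin : y ∈ Subgroup.zpowers z
      · -- cyclic case generated by z
        have hclos : Subgroup.closure {z, y} = Subgroup.zpowers z := by
          apply le_antisymm
          · rw [Subgroup.closure_le]
            rintro w hw
            rcases Set.mem_insert_iff.mp hw with h | h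
            · rw [h]; exact Subgroup.mem_zpowers z
            · rw [Set.mem_singleton_iff.mp h]; exact hyin
          · rw [Subgroup.zpowers_le]
            exact Subgroup.subset_closure (Set.mem_insert _ _)
        exact Or.inl (cyclic_case _ z 2 (by norm_num) hz2 hclos)
      · -- neither: noncyclic or k = 3
        have hyne1 : y ≠ 1 := fun h => hyin (h ▸ Subgroup.one_mem _)
        have hkne1 : orderOf y ≠ 1 := fun h => hyne1 (orderOf_eq_one_iff.mp h)
        have hkpos : 0 < orderOf y := orderOf_pos y
        have hk : orderOf y = 2 ∨ orderOf y = 3 ∨ orderOf y = 4 ∨ orderOf y = 6 := by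
          rcases hk46 with h | h
          · have := Nat.le_of_dvd (by norm_num) h
            interval_cases h' : orderOf y <;> omega
          · have := Nat.le_of_dvd (by norm_num) h
            interval_cases h' : orderOf y <;> omega
        rcases hk with hk | hk | hk | hk
        · exact Or.inr (Or.inl (noncyclic_case z y hz2 hc 2 (by norm_num) hk hzin))
        · -- k = 3 : closure is cyclic of order 6, generated by z * y
          have hord : orderOf (z * y) = 6 := by
            rw [Commute.orderOf_mul_eq_mul_orderOf_of_coprime hc (by rw [hz2, hk]; decide),
              hz2, hk]
          have hy3 : y ^ 3 = 1 := by
            have := pow_orderOf_eq_one y; rwa [hk] at this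
          have hzy3 : (z * y) ^ 3 = z := by
            rw [hc.mul_pow, hy3, mul_one, pow_succ, hzsq, one_mul]
          have hzy4 : (z * y) ^ 4 = y := by
            have h4 : (z * y) ^ 4 = (z * y) ^ 3 * (z * y) := by rw [← pow_succ]
            rw [h4, hzy3, ← mul_assoc, ← pow_two, hzsq, one_mul]
          have hclos : Subgroup.closure {z, y} = Subgroup.zpowers (z * y) := by
            apply le_antisymm
            · rw [Subgroup.closure_le]
              rintro w hw
              rcases Set.mem_insert_iff.mp hw with h | h
              · have h3 : (z * y) ^ 3 ∈ Subgroup.zpowers (z * y) :=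
                  pow_mem (Subgroup.mem_zpowers _) 3
                rw [hzy3] at h3
                rw [h]; exact h3
              · have h4 : (z * y) ^ 4 ∈ Subgroup.zpowers (z * y) :=
                  pow_mem (Subgroup.mem_zpowers _) 4
                rw [hzy4] at h4
                rw [Set.mem_singleton_iff.mp h]; exact h4
            · rw [Subgroup.zpowers_le]
              exact mul_mem
                (Subgroup.subset_closure (Set.mem_insert _ _))
                (Subgroup.subset_closure (Set.mem_insert_of_mem _ rfl))
          exact Or.inr (Or.inr (Or.inr (Or.inl
            (cyclic_case _ (z * y) 6 (by norm_num) hord hclos))))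
        · exact Or.inr (Or.inr (Or.inr (Or.inr (Or.inl
            (noncyclic_case z y hz2 hc 4 (by norm_num) hk hzin)))))
        · exact Or.inr (Or.inr (Or.inr (Or.inr (Or.inr (Or.inl
            (noncyclic_case z y hz2 hc 6 (by norm_num) hk hzin))))))
end

section
/- Let G be a finite group with subgroups U and V and an element z ∈ G such that: every element of U commutes with every element of V and U ∩ V = 1; the subgroup UV is normal in G; G = ⟨U, V, z⟩ and z ∉ UV; z normalizes both U and V; every element of the subgroup ⟨U, z⟩ has order dividing 3; V is a nontrivial elementary abelian 2-group; and no nontrivial element of V commutes with z (C_V(z) = 1). Then G has property (P). -/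
open Subgroup Pointwise

namespace Stmt14Aux

variable {G : Type*} [Group G]

/-- `Equiv.permCongr` as a `MulEquiv`. -/
def permMulEquiv {α β : Type*} (e : α ≃ β) : Equiv.Perm α ≃* Equiv.Perm β :=
  { Equiv.permCongr e with
    map_mul' := fun p q => Equiv.ext fun b => by
      simp [Equiv.permCongr_apply, Equiv.Perm.mul_apply] }

/-- The canonical hom from `Multiplicative (ZMod n)` sending `1` to an element of order `n`. -/
def zmodHom (n : ℕ) [NeZero n] (b : G) (hb : orderOf b = n) :
    Multiplicative (ZMod n) →* G where
  toFun t := b ^ (Multiplicative.toAdd t).val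
  map_one' := by simp
  map_mul' s t := by
    have key : ∀ A B : ℕ, b ^ ((A + B) % n) = b ^ A * b ^ B := by
      intro A B
      rw [← hb, pow_mod_orderOf, pow_add]
    show b ^ (Multiplicative.toAdd (s * t)).val = _
    have h1 : Multiplicative.toAdd (s * t) = Multiplicative.toAdd s + Multiplicative.toAdd t := rfl
    rw [h1, ZMod.val_add, key]

lemma zmodHom_injective (n : ℕ) [NeZero n] (b : G) (hb : orderOf b = n) :
    Function.Injective (zmodHom n b hb) := by
  rw [injective_iff_map_eq_one]
  intro a ha
  have hd : n ∣ (Multiplicative.toAdd a).val := by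
    have := orderOf_dvd_of_pow_eq_one ha
    rwa [hb] at this
  have hlt : (Multiplicative.toAdd a).val < n := ZMod.val_lt _
  have h0 : Multiplicative.toAdd a = 0 :=
    (ZMod.val_eq_zero _).mp (Nat.eq_zero_of_dvd_of_lt hd hlt)
  calc a = Multiplicative.ofAdd (Multiplicative.toAdd a) := rfl
    _ = Multiplicative.ofAdd 0 := by rw [h0]
    _ = 1 := rfl

lemma zmodHom_range (n : ℕ) [NeZero n] (b : G) (hb : orderOf b = n) :
    (zmodHom n b hb).range = zpowers b := by
  apply le_antisymm
  · rintro g ⟨t, rfl⟩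
    exact pow_mem (mem_zpowers b) _
  · rw [zpowers_le]
    refine ⟨Multiplicative.ofAdd 1, ?_⟩
    show b ^ (Multiplicative.toAdd (Multiplicative.ofAdd (1 : ZMod n))).val = b
    rw [toAdd_ofAdd, show (1 : ZMod n) = ((1 : ℕ) : ZMod n) by simp, ZMod.val_natCast,
      ← hb, pow_mod_orderOf, pow_one]

lemma cyclic_iso (n : ℕ) [NeZero n] (b : G) (hb : orderOf b = n) :
    Nonempty ((zpowers b : Subgroup G) ≃* Multiplicative (ZMod n)) :=
  ⟨(MulEquiv.subgroupCongr (zmodHom_range n b hb).symm).trans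
    (MonoidHom.ofInjective (zmodHom_injective n b hb)).symm⟩

lemma prod_iso (n : ℕ) [NeZero n] (a b : G) (ha : orderOf a = 2) (hb : orderOf b = n)
    (hc : Commute a b) (hdisj : ∀ g, g ∈ zpowers a → g ∈ zpowers b → g = 1) :
    Nonempty ((closure {a, b} : Subgroup G) ≃*
      Multiplicative (ZMod 2) × Multiplicative (ZMod n)) := by
  set f := zmodHom 2 a ha with hf
  set g := zmodHom n b hb with hg
  have hcp : ∀ (m : Multiplicative (ZMod 2)) (p : Multiplicative (ZMod n)),
      Commute (f m) (g p) := by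
    intro m p
    show Commute (a ^ _) (b ^ _)
    exact hc.pow_pow _ _
  set F := f.noncommCoprod g hcp with hF
  have hFapp : ∀ s t, F (s, t) = f s * g t := fun s t => rfl
  have hfr : ∀ s, f s ∈ zpowers a := by
    intro s
    have : f s ∈ f.range := ⟨s, rfl⟩
    rwa [hf, zmodHom_range] at this
  have hgr : ∀ t, g t ∈ zpowers b := by
    intro t
    have : g t ∈ g.range := ⟨t, rfl⟩
    rwa [hg, zmodHom_range] at this
  have hinj : Function.Injective F := by
    rw [injective_iff_map_eq_one]
    rintro ⟨s, t⟩ hst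
    rw [hFapp] at hst
    have h2 : f s = 1 := hdisj _ (hfr s) (by
      have h1 : f s = (g t)⁻¹ := eq_inv_of_mul_eq_one_left hst
      rw [h1]
      exact inv_mem (hgr t))
    have h3 : g t = 1 := by rw [h2, one_mul] at hst; exact hst
    have hs : s = 1 := zmodHom_injective 2 a ha (by rw [← hf, h2, map_one])
    have ht : t = 1 := zmodHom_injective n b hb (by rw [← hg, h3, map_one])
    rw [hs, ht]
    rfl
  have hrange : F.range = closure {a, b} := by
    apply le_antisymm
    · rintro w ⟨⟨s, t⟩, rfl⟩
      rw [hFapp]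
      have h1 : f s ∈ closure {a, b} :=
        zpowers_le.mpr (subset_closure (by simp)) (hfr s)
      have h2 : g t ∈ closure {a, b} :=
        zpowers_le.mpr (subset_closure (by simp)) (hgr t)
      exact mul_mem h1 h2
    · rw [closure_le]
      intro w hw
      simp only [Set.mem_insert_iff, Set.mem_singleton_iff] at hw
      rcases hw with rfl | rfl
      · have : w ∈ f.range := by rw [hf, zmodHom_range]; exact mem_zpowers w
        obtain ⟨s, hs⟩ := this
        exact ⟨(s, 1), by rw [hFapp, hs, map_one, mul_one]⟩
      · have : w ∈ g.range := by rw [hg, zmodHom_range]; exact mem_zpowers w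
        obtain ⟨t, ht⟩ := this
        exact ⟨(1, t), by rw [hFapp, ht, map_one, one_mul]⟩
  exact ⟨(MulEquiv.subgroupCongr hrange.symm).trans (MonoidHom.ofInjective hinj).symm⟩

lemma mem_zpowers_elim {b : G} {n : ℕ} (hb : orderOf b = n) (hn : 0 < n) :
    ∀ g ∈ zpowers b, ∃ r : ℤ, 0 ≤ r ∧ r < n ∧ g = b ^ r := by
  intro g hg
  obtain ⟨k, rfl⟩ := mem_zpowers_iff.mp hg
  have hn' : (n : ℤ) ≠ 0 := by exact_mod_cast hn.ne'
  refine ⟨k % n, Int.emod_nonneg k hn', Int.emod_lt_of_pos k (by exact_mod_cast hn), ?_⟩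
  rw [← hb]
  exact (zpow_mod_orderOf b k).symm

lemma orbit_base (z v a b : G) (ha : z * v * z⁻¹ = a)
    (hb : z * a * z⁻¹ = b) (hzb : z * b * z⁻¹ = v)
    (hcomm1 : v * (a * b) = (a * b) * v)
    (hcv : (v * a * b) * z = z * (v * a * b) → v * a * b = 1) :
    v * a * b = 1 := by
  apply hcv
  have h5 : z * (v * a * b) * z⁻¹ = v * a * b := by
    calc z * (v * a * b) * z⁻¹ = (z * v * z⁻¹) * (z * a * z⁻¹) * (z * b * z⁻¹) := by group
      _ = a * b * v := by rw [ha, hb, hzb]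
      _ = v * (a * b) := hcomm1.symm
      _ = v * a * b := by rw [mul_assoc]
  calc (v * a * b) * z = z * (v * a * b) * z⁻¹ * z := by rw [h5]
    _ = z * (v * a * b) := by group

lemma isoA4 (x y : G) (hxx : x * x = 1) (hx1 : x ≠ 1) (hy3 : y ^ 3 = 1)
    (hxt : y * x * y⁻¹ ≠ x) (hco : x * (y * x * y⁻¹) = (y * x * y⁻¹) * x)
    (hyt : y * (y * x * y⁻¹) * y⁻¹ = x * (y * x * y⁻¹)) :
    Nonempty ((closure {x, y} : Subgroup G) ≃* alternatingGroup (Fin 4)) := by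
  obtain ⟨t, ht⟩ : ∃ t, t = y * x * y⁻¹ := ⟨_, rfl⟩
  rw [← ht] at hxt hco hyt
  have hxinv : x⁻¹ = x := inv_eq_of_mul_eq_one_right hxx
  have htt : t * t = 1 := by
    have h1 : t * t = y * (x * x) * y⁻¹ := by rw [ht]; group
    rw [h1, hxx]
    simp
  have htinv : t⁻¹ = t := inv_eq_of_mul_eq_one_right htt
  have ht1 : t ≠ 1 := by
    intro h
    apply hx1
    have h2 : x = y⁻¹ * t * y := by rw [ht]; group
    rw [h] at h2
    simpa using h2
  have hy1 : y ≠ 1 := fun h => hxt (by rw [ht, h]; simp)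
  have horder_y : orderOf y = 3 := by
    haveI : Fact (Nat.Prime 3) := ⟨by norm_num⟩
    exact orderOf_eq_prime hy3 hy1
  have hco' : t * x = x * t := hco.symm
  have c1 : y * x * y⁻¹ = t := ht.symm
  have c2 : y * t * y⁻¹ = x * t := hyt
  have p3 : t * (x * t) = x := by
    calc t * (x * t) = (t * x) * t := by rw [mul_assoc]
      _ = (x * t) * t := by rw [hco']
      _ = x * (t * t) := by rw [mul_assoc]
      _ = x := by rw [htt, mul_one]
  have c3 : y * (x * t) * y⁻¹ = x := by
    have h1 : y * (x * t) * y⁻¹ = (y * x * y⁻¹) * (y * t * y⁻¹) := by group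
    rw [h1, c1, c2, p3]
  have d1 : y⁻¹ * x * y = x * t := by
    calc y⁻¹ * x * y = y⁻¹ * (y * (x * t) * y⁻¹) * y := by rw [c3]
      _ = x * t := by group
  have d2 : y⁻¹ * t * y = x := by
    calc y⁻¹ * t * y = y⁻¹ * (y * x * y⁻¹) * y := by rw [c1]
      _ = x := by group
  have d3 : y⁻¹ * (x * t) * y = t := by
    calc y⁻¹ * (x * t) * y = y⁻¹ * (y * t * y⁻¹) * y := by rw [c2]
      _ = t := by group
  have hxt' : x ≠ t := Ne.symm hxt
  have hxt1 : x * t ≠ 1 := by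
    intro h
    have h2 : t = x⁻¹ := eq_inv_of_mul_eq_one_right h
    rw [hxinv] at h2
    exact hxt h2
  have hx_xt : x ≠ x * t := by
    intro h
    apply ht1
    have : x * 1 = x * t := by rw [mul_one]; exact h
    exact (mul_left_cancel this).symm
  have ht_xt : t ≠ x * t := by
    intro h
    apply hx1
    have : 1 * t = x * t := by rw [one_mul]; exact h
    exact (mul_right_cancel this).symm
  have hxtxt : (x * t) * (x * t) = 1 := by
    calc (x * t) * (x * t) = x * (t * x) * t := by group
      _ = x * (x * t) * t := by rw [hco']
      _ = (x * x) * (t * t) := by group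
      _ = 1 := by rw [hxx, htt, mul_one]
  have hxtinv : (x * t)⁻¹ = x * t := inv_eq_of_mul_eq_one_right hxtxt
  have p1 : x * (x * t) = t := by rw [← mul_assoc, hxx, one_mul]
  have p4 : (x * t) * x = t := by
    calc (x * t) * x = x * (t * x) := by group
      _ = x * (x * t) := by rw [hco']
      _ = t := p1
  have p5 : (x * t) * t = x := by rw [mul_assoc, htt, mul_one]
  -- the Klein subgroup
  have hmulmem : ∀ a ∈ ({1, x, t, x * t} : Set G), ∀ b ∈ ({1, x, t, x * t} : Set G),
      a * b ∈ ({1, x, t, x * t} : Set G) := by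
    intro a ha b hb
    simp only [Set.mem_insert_iff, Set.mem_singleton_iff] at ha hb ⊢
    rcases ha with rfl | rfl | rfl | rfl <;> rcases hb with rfl | rfl | rfl | rfl <;>
      simp [hxx, htt, p1, p3, p4, p5, hco', hxtxt]
  set K : Subgroup G :=
    { carrier := {1, x, t, x * t}
      one_mem' := by simp
      mul_mem' := fun ha hb => hmulmem _ ha _ hb
      inv_mem' := by
        intro a ha
        simp only [Set.mem_insert_iff, Set.mem_singleton_iff] at ha ⊢
        rcases ha with rfl | rfl | rfl | rfl <;> simp [hxinv, htinv, hxtinv] } with hK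
  have hmemK : ∀ g : G, g ∈ K ↔ (g = 1 ∨ g = x ∨ g = t ∨ g = x * t) := by
    intro g
    rw [hK]
    simp [Set.mem_insert_iff]
  -- x*y*x is not a power of y
  have hyy : y * y * y = 1 := by rw [← hy3, pow_succ, pow_two]
  have hxyx : x * y * x ∉ zpowers y := by
    intro hmem
    obtain ⟨r, hr0, hr3, hre⟩ := mem_zpowers_elim horder_y (by norm_num) _ hmem
    interval_cases r
    · rw [zpow_zero] at hre
      apply hy1
      calc y = (x * x) * y * (x * x) := by rw [hxx]; simp
        _ = x * (x * y * x) * x := by group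
        _ = x * 1 * x := by rw [hre]
        _ = 1 := by rw [mul_one, hxx]
    · rw [zpow_one] at hre
      apply hxt
      have hxy : x * y = y * x := by
        have h1 : (x * y * x) * x = x * y := by rw [mul_assoc, hxx, mul_one]
        calc x * y = (x * y * x) * x := h1.symm
          _ = y * x := by rw [hre]
      rw [ht, show y * x = x * y from hxy.symm, mul_assoc]
      simp
    · rw [show (2 : ℤ) = 1 + 1 by norm_num, zpow_add, zpow_one] at hre
      apply hy1
      have ht2 : t = y * y * x := by
        rw [ht]
        calc y * x * y⁻¹ = y * x * (y * y) := by rw [inv_eq_of_mul_eq_one_left hyy]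
          _ = y * x * (x * y * x) := by rw [← hre]
          _ = y * (x * x) * (y * x) := by group
          _ = y * y * x := by rw [hxx]; group
      have h6 : t * x = y * y := by rw [ht2, mul_assoc, hxx, mul_one]
      have h7 : (t * x) * (t * x) = y := by
        rw [h6]
        calc (y * y) * (y * y) = (y * y * y) * y := by group
          _ = y := by rw [hyy, one_mul]
      have h8 : (t * x) * (t * x) = 1 := by
        calc (t * x) * (t * x) = t * (x * t) * x := by group
          _ = t * (t * x) * x := by rw [← hco']
          _ = (t * t) * (x * x) := by group
          _ = 1 := by rw [htt, hxx, mul_one]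
      rw [← h7, h8]
  -- pass to the closure subgroup
  have hxH : x ∈ closure ({x, y} : Set G) := subset_closure (by simp)
  have hyH : y ∈ closure ({x, y} : Set G) := subset_closure (by simp)
  have htH : t ∈ closure ({x, y} : Set G) := by
    rw [ht]; exact mul_mem (mul_mem hyH hxH) (inv_mem hyH)
  have hKH : K ≤ closure ({x, y} : Set G) := by
    intro g hg
    rcases (hmemK g).mp hg with rfl | rfl | rfl | rfl
    · exact one_mem _
    · exact hxH
    · exact htH
    · exact mul_mem hxH htH
  have hyNorm : y ∈ normalizer (K : Set G) := by
    rw [mem_normalizer_iff]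
    intro h
    constructor
    · intro hh
      rcases (hmemK h).mp hh with rfl | rfl | rfl | rfl
      · exact (hmemK _).mpr (Or.inl (by group))
      · exact (hmemK _).mpr (Or.inr (Or.inr (Or.inl c1)))
      · exact (hmemK _).mpr (Or.inr (Or.inr (Or.inr c2)))
      · exact (hmemK _).mpr (Or.inr (Or.inl c3))
    · intro hh
      have hrw : h = y⁻¹ * (y * h * y⁻¹) * y := by group
      rcases (hmemK _).mp hh with e | e | e | e <;> rw [hrw, e]
      · exact (hmemK _).mpr (Or.inl (by group))
      · exact (hmemK _).mpr (Or.inr (Or.inr (Or.inr d1)))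
      · exact (hmemK _).mpr (Or.inr (Or.inl d2))
      · exact (hmemK _).mpr (Or.inr (Or.inr (Or.inl d3)))
  have hHnorm : closure ({x, y} : Set G) ≤ normalizer (K : Set G) := by
    rw [closure_le]
    intro g hg
    simp only [Set.mem_insert_iff, Set.mem_singleton_iff] at hg
    rcases hg with rfl | rfl
    · exact le_normalizer ((hmemK g).mpr (Or.inr (Or.inl rfl)))
    · exact hyNorm
  have hcardK : Nat.card K = 4 := by
    have h1 : Nat.card K = ({1, x, t, x * t} : Set G).ncard := by
      rw [← Nat.card_coe_set_eq]
      rfl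
    rw [h1, Set.ncard_insert_of_notMem
        (by simp [Ne.symm hx1, Ne.symm ht1, Ne.symm hxt1]),
      Set.ncard_insert_of_notMem (by simp [hxt', hx_xt]),
      Set.ncard_insert_of_notMem (by simp [ht_xt]), Set.ncard_singleton]
  have hKnormal : (K.subgroupOf (closure ({x, y} : Set G))).Normal := by
    constructor
    intro n hn g
    rw [mem_subgroupOf] at hn ⊢
    have hg := hHnorm g.2
    rw [mem_normalizer_iff] at hg
    simpa using (hg ↑n).mp hn
  haveI := hKnormal
  have hsup : K.subgroupOf (closure ({x, y} : Set G)) ⊔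
      (zpowers y).subgroupOf (closure ({x, y} : Set G)) = ⊤ := by
    rw [eq_top_iff, ← closure_closure_coe_preimage (k := ({x, y} : Set G)), closure_le]
    rintro ⟨g, hgH⟩ hg
    simp only [Set.mem_preimage, Set.mem_insert_iff, Set.mem_singleton_iff] at hg
    rcases hg with rfl | rfl
    · exact mem_sup_left (by rw [mem_subgroupOf]; exact (hmemK _).mpr (Or.inr (Or.inl rfl)))
    · exact mem_sup_right (by rw [mem_subgroupOf]; exact mem_zpowers _)
  have hdisj : Disjoint (K.subgroupOf (closure ({x, y} : Set G)))
      ((zpowers y).subgroupOf (closure ({x, y} : Set G))) := by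
    rw [disjoint_def]
    intro a ha hb
    rw [mem_subgroupOf] at ha hb
    have h2 : (a : G) * (a : G) = 1 := by
      rcases (hmemK _).mp ha with e | e | e | e <;> rw [e]
      · simp
      · exact hxx
      · exact htt
      · exact hxtxt
    obtain ⟨r, hr0, hr3, hre⟩ := mem_zpowers_elim horder_y (by norm_num) _ hb
    have h3 : (a : G) = 1 := by
      interval_cases r
      · simpa using hre
      · rw [zpow_one] at hre
        rw [hre] at h2 ⊢
        calc y = (y * y) * y := by rw [h2, one_mul]
          _ = 1 := hyy
      · rw [show (2 : ℤ) = 1 + 1 by norm_num, zpow_add, zpow_one] at hre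
        rw [hre] at h2 ⊢
        have h4 : y = 1 := by
          calc y = (y * y * y) * y := by rw [hyy, one_mul]
            _ = (y * y) * (y * y) := by group
            _ = 1 := h2
        rw [h4]; simp
    exact Subtype.ext h3
  have hcompl := isComplement'_of_disjoint_and_mul_eq_univ hdisj
    (by rw [← normal_mul, hsup, coe_top])
  have hcardK' : Nat.card (K.subgroupOf (closure ({x, y} : Set G))) = 4 := by
    rw [Nat.card_congr (subgroupOfEquivOfLe hKH).toEquiv, hcardK]
  have hyH' : zpowers y ≤ closure ({x, y} : Set G) := zpowers_le.mpr hyH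
  have hcardY' : Nat.card ((zpowers y).subgroupOf (closure ({x, y} : Set G))) = 3 := by
    rw [Nat.card_congr (subgroupOfEquivOfLe hyH').toEquiv, Nat.card_zpowers, horder_y]
  have hcardH : Nat.card (closure ({x, y} : Set G)) = 12 := by
    have h := hcompl.card_mul
    rw [hcardK', hcardY'] at h
    omega
  haveI hfinH : Finite (closure ({x, y} : Set G)) :=
    Nat.finite_of_card_ne_zero (by rw [hcardH]; norm_num)
  have hcardQ : Nat.card ((closure ({x, y} : Set G)) ⧸
      (zpowers y).subgroupOf (closure ({x, y} : Set G))) = 4 := by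
    have h := Subgroup.card_eq_card_quotient_mul_card_subgroup
      ((zpowers y).subgroupOf (closure ({x, y} : Set G)))
    rw [hcardH, hcardY'] at h
    omega
  have hker : ∀ h : (closure ({x, y} : Set G)),
      (∀ q : (closure ({x, y} : Set G)) ⧸ (zpowers y).subgroupOf (closure ({x, y} : Set G)),
        h • q = q) → h = 1 := by
    intro h hfix
    have h1 : (h : G) ∈ zpowers y := by
      have h0 := hfix (QuotientGroup.mk 1)
      rw [MulAction.Quotient.smul_mk, QuotientGroup.eq] at h0
      rw [mem_subgroupOf] at h0
      simpa using inv_mem h0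
    have h2 : x⁻¹ * (h : G)⁻¹ * x ∈ zpowers y := by
      have h0 := hfix (QuotientGroup.mk ⟨x, hxH⟩)
      rw [MulAction.Quotient.smul_mk, QuotientGroup.eq] at h0
      rw [mem_subgroupOf] at h0
      simpa [mul_assoc] using h0
    have h2' : x * (h : G) * x ∈ zpowers y := by
      have := inv_mem h2
      simpa [mul_assoc, hxinv] using this
    obtain ⟨r, hr0, hr3, hre⟩ := mem_zpowers_elim horder_y (by norm_num) _ h1
    have h3 : (h : G) = 1 := by
      interval_cases r
      · simpa using hre
      · rw [zpow_one] at hre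
        rw [hre] at h2'
        exact absurd h2' hxyx
      · rw [show (2 : ℤ) = 1 + 1 by norm_num, zpow_add, zpow_one] at hre
        have h4 : ((h : G))⁻¹ = y := by
          rw [hre]
          exact inv_eq_of_mul_eq_one_left (by rw [← mul_assoc]; exact hyy)
        have h5 : x * y * x ∈ zpowers y := by
          have := h2
          rw [h4, hxinv] at this
          exact this
        exact absurd h5 hxyx
    exact Subtype.ext h3
  have hinj : Function.Injective (MulAction.toPermHom (closure ({x, y} : Set G))
      ((closure ({x, y} : Set G)) ⧸ (zpowers y).subgroupOf (closure ({x, y} : Set G)))) := by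
    rw [injective_iff_map_eq_one]
    intro h hh
    exact hker h (fun q => Equiv.ext_iff.mp hh q)
  haveI : Fintype ((closure ({x, y} : Set G)) ⧸
      (zpowers y).subgroupOf (closure ({x, y} : Set G))) := Fintype.ofFinite _
  have hcardQ' : Fintype.card ((closure ({x, y} : Set G)) ⧸
      (zpowers y).subgroupOf (closure ({x, y} : Set G))) = 4 := by
    rw [← Nat.card_eq_fintype_card, hcardQ]
  let eQ := Fintype.equivFinOfCardEq hcardQ'
  let φ := MulAction.toPermHom (closure ({x, y} : Set G))
      ((closure ({x, y} : Set G)) ⧸ (zpowers y).subgroupOf (closure ({x, y} : Set G)))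
  let e1 : (closure ({x, y} : Set G)) ≃* φ.range := MonoidHom.ofInjective hinj
  let e2 := permMulEquiv eQ
  let S := φ.range.map e2.toMonoidHom
  let e3 : φ.range ≃* S := e2.subgroupMap φ.range
  have hcardPerm : Nat.card (Equiv.Perm (Fin 4)) = 24 := by
    rw [Nat.card_eq_fintype_card, Fintype.card_perm, Fintype.card_fin]
    norm_num [Nat.factorial]
  have hcardS : Nat.card S = 12 := by
    have hh1 : Nat.card (closure ({x, y} : Set G)) = Nat.card φ.range :=
      Nat.card_congr e1.toEquiv
    have hh2 : Nat.card φ.range = Nat.card S := Nat.card_congr e3.toEquiv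
    rw [← hh2, ← hh1, hcardH]
  have hidx : S.index = 2 := by
    have h := S.card_mul_index
    rw [hcardS, hcardPerm] at h
    omega
  have hA4le : alternatingGroup (Fin 4) ≤ S := by
    rw [← Equiv.Perm.closure_three_cycles_eq_alternating, closure_le]
    intro σ hσ
    have h3 : σ ^ 3 = 1 := by
      have := pow_orderOf_eq_one σ
      rwa [Equiv.Perm.IsThreeCycle.orderOf hσ] at this
    have h4 : σ = (σ ^ 2) ^ 2 := by
      rw [← pow_mul]
      calc σ = 1 * σ := (one_mul σ).symm
        _ = σ ^ 3 * σ := by rw [h3]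
        _ = σ ^ (2 * 2) := by rw [← pow_succ]
    have h5 : (σ ^ 2) ^ 2 ∈ S := Subgroup.sq_mem_of_index_two hidx (σ ^ 2)
    rw [← h4] at h5
    exact h5
  have hSA : S = alternatingGroup (Fin 4) := by
    symm
    apply Subgroup.eq_of_le_of_card_ge hA4le
    have hcA : Nat.card (alternatingGroup (Fin 4)) = 12 := by
      have h := two_mul_card_alternatingGroup (α := Fin 4)
      have h2 : Fintype.card (Equiv.Perm (Fin 4)) = 24 := by
        rw [Fintype.card_perm, Fintype.card_fin]
        norm_num [Nat.factorial]
      rw [h2] at h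
      rw [Nat.card_eq_fintype_card]
      omega
    rw [hcA, hcardS]
  exact ⟨(e1.trans e3).trans (MulEquiv.subgroupCongr hSA)⟩

end Stmt14Aux

open Subgroup Pointwise Stmt14Aux in
/-- sufficiency for family (b): if `G = (U × V) ⋊ ⟨z⟩` where `U` and
`V` commute elementwise with trivial intersection, `UV ⊴ G`, `z ∉ UV` normalizes
both `U` and `V`, every element of `⟨U, z⟩` has order dividing 3, `V` is a
nontrivial elementary abelian 2-group and `C_V(z) = 1`, then `G` has property (P). -/
theorem stmt14 (G : Type*) [Group G] [Finite G] (U V : Subgroup G) (z : G)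
    (hcomm : ∀ u ∈ U, ∀ v ∈ V, u * v = v * u)
    (hUV : U ⊓ V = ⊥)
    (hnorm : (U ⊔ V).Normal)
    (hgen : U ⊔ V ⊔ Subgroup.zpowers z = ⊤)
    (hz : z ∉ U ⊔ V)
    (hzU : ∀ u : G, u ∈ U ↔ z⁻¹ * u * z ∈ U)
    (hzV : ∀ v : G, v ∈ V ↔ z⁻¹ * v * z ∈ V)
    (hUz3 : ∀ g ∈ U ⊔ Subgroup.zpowers z, orderOf g ∣ 3)
    (hVnt : V ≠ ⊥)
    (hV2 : ∀ v ∈ V, v ^ 2 = 1)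
    (hCV : ∀ v ∈ V, v * z = z * v → v = 1) :
    PropertyP G := by
  haveI := hnorm
  have hVinv : ∀ v ∈ V, v⁻¹ = v := fun v hv =>
    inv_eq_of_mul_eq_one_right (by rw [← pow_two]; exact hV2 v hv)
  have hVcomm : ∀ a ∈ V, ∀ b ∈ V, a * b = b * a := by
    intro a ha b hb
    have h1 : (a * b)⁻¹ = a * b := hVinv _ (mul_mem ha hb)
    calc a * b = (a * b)⁻¹ := h1.symm
      _ = b⁻¹ * a⁻¹ := mul_inv_rev a b
      _ = b * a := by rw [hVinv a ha, hVinv b hb]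
  have hz3 : z ^ 3 = 1 :=
    orderOf_dvd_iff_pow_eq_one.mp (hUz3 z (mem_sup_right (mem_zpowers z)))
  have hz3' : z ^ (3 : ℤ) = 1 := by
    rw [show (3 : ℤ) = ((3 : ℕ) : ℤ) from rfl, zpow_natCast, hz3]
  have hzVnorm : z ∈ normalizer (V : Set G) := by
    have h1 : z⁻¹ ∈ normalizer (V : Set G) := by
      rw [mem_normalizer_iff]
      intro v
      rw [inv_inv]
      exact hzV v
    simpa using inv_mem h1
  have hconjV : ∀ (k : ℤ), ∀ v ∈ V, z ^ k * v * (z ^ k)⁻¹ ∈ V := by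
    intro k v hv
    have h1 : z ^ k ∈ normalizer (V : Set G) := zpow_mem hzVnorm k
    rw [mem_normalizer_iff] at h1
    exact (h1 v).mp hv
  have hconjV1 : ∀ v ∈ V, z * v * z⁻¹ ∈ V := by
    intro v hv
    simpa using hconjV 1 v hv
  have zred : ∀ j : ℤ, z ^ j = z ^ (j % 3) := by
    intro j
    conv_lhs => rw [← Int.mul_ediv_add_emod j 3]
    rw [zpow_add, zpow_mul, hz3', one_zpow, one_mul]
  have hbase : ∀ v ∈ V, v * (z * v * z⁻¹) * (z ^ (2:ℤ) * v * (z ^ (2:ℤ))⁻¹) = 1 := by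
    intro v hv
    have haV : z * v * z⁻¹ ∈ V := hconjV1 v hv
    have hbV : z ^ (2:ℤ) * v * (z ^ (2:ℤ))⁻¹ ∈ V := hconjV 2 v hv
    have hz2 : z ^ (2:ℤ) = z * z := by rw [show (2:ℤ) = 1+1 from rfl, zpow_add, zpow_one]
    refine orbit_base z v _ _ rfl (by rw [hz2]; group) ?_ ?_ ?_
    · have h9 : z * (z ^ (2:ℤ) * v * (z ^ (2:ℤ))⁻¹) * z⁻¹ = z ^ (3:ℤ) * v * (z ^ (3:ℤ))⁻¹ := by
        group
      rw [h9, hz3']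
      simp
    · exact hVcomm v hv _ (mul_mem haV hbV)
    · exact fun hc => hCV _ (mul_mem (mul_mem hv haV) hbV) hc
  have horb : ∀ m : ℤ, ¬ ((3:ℤ) ∣ m) → ∀ v ∈ V,
      v * (z ^ m * v * (z ^ m)⁻¹) * (z ^ (2*m) * v * (z ^ (2*m))⁻¹) = 1 := by
    intro m hm v hv
    have haV : z * v * z⁻¹ ∈ V := hconjV1 v hv
    have hbV : z ^ (2:ℤ) * v * (z ^ (2:ℤ))⁻¹ ∈ V := hconjV 2 v hv
    have hm0 : m % 3 ≠ 0 := fun h => hm (Int.dvd_of_emod_eq_zero h)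
    rcases (show m % 3 = 1 ∨ m % 3 = 2 by omega) with h | h
    · rw [zred m, zred (2*m), h, show (2*m) % 3 = 2 by omega, zpow_one]
      exact hbase v hv
    · rw [zred m, zred (2*m), h, show (2*m) % 3 = 1 by omega, zpow_one]
      calc v * (z ^ (2:ℤ) * v * (z ^ (2:ℤ))⁻¹) * (z * v * z⁻¹)
          = v * ((z ^ (2:ℤ) * v * (z ^ (2:ℤ))⁻¹) * (z * v * z⁻¹)) := mul_assoc _ _ _
        _ = v * ((z * v * z⁻¹) * (z ^ (2:ℤ) * v * (z ^ (2:ℤ))⁻¹)) := by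
            rw [hVcomm _ hbV _ haV]
        _ = v * (z * v * z⁻¹) * (z ^ (2:ℤ) * v * (z ^ (2:ℤ))⁻¹) := (mul_assoc _ _ _).symm
        _ = 1 := hbase v hv
  have L1 : ∀ g ∈ U ⊔ V, ∃ u ∈ U, ∃ v ∈ V, g = u * v := by
    intro g hg
    rw [sup_eq_closure] at hg
    refine closure_induction ?_ ?_ ?_ ?_ hg
    · intro w hw
      rcases hw with hw | hw
      · exact ⟨w, hw, 1, one_mem V, (mul_one w).symm⟩
      · exact ⟨1, one_mem U, w, hw, (one_mul w).symm⟩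
    · exact ⟨1, one_mem U, 1, one_mem V, (one_mul 1).symm⟩
    · rintro g1 g2 _ _ ⟨u1, hu1, v1, hv1, rfl⟩ ⟨u2, hu2, v2, hv2, rfl⟩
      refine ⟨u1 * u2, mul_mem hu1 hu2, v1 * v2, mul_mem hv1 hv2, ?_⟩
      calc u1 * v1 * (u2 * v2) = u1 * (v1 * u2) * v2 := by group
        _ = u1 * (u2 * v1) * v2 := by rw [← hcomm u2 hu2 v1 hv1]
        _ = u1 * u2 * (v1 * v2) := by group
    · rintro g1 _ ⟨u, hu, v, hv, rfl⟩
      refine ⟨u⁻¹, inv_mem hu, v⁻¹, inv_mem hv, ?_⟩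
      rw [mul_inv_rev, ← hcomm u⁻¹ (inv_mem hu) v⁻¹ (inv_mem hv)]
  have L2 : ∀ g : G, ∃ u ∈ U, ∃ v ∈ V, ∃ k : ℤ, g = u * v * z ^ k := by
    intro g
    have hg : g ∈ (U ⊔ V) ⊔ zpowers z := by rw [hgen]; exact mem_top g
    have hg2 : g ∈ ((U ⊔ V : Subgroup G) : Set G) * ((zpowers z : Subgroup G) : Set G) := by
      rw [← normal_mul]
      exact hg
    obtain ⟨n, hn, w, hw, rfl⟩ := hg2
    obtain ⟨u, hu, v, hv, rfl⟩ := L1 n hn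
    obtain ⟨k, hk⟩ := mem_zpowers_iff.mp hw
    exact ⟨u, hu, v, hv, k, by rw [hk]⟩
  have hmemV2 : ∀ g : G, orderOf g = 2 → g ∈ V ∧ g ≠ 1 := by
    intro g hg
    have hg2 : g ^ 2 = 1 := by rw [← hg]; exact pow_orderOf_eq_one g
    have hg1 : g ≠ 1 := by
      intro h
      rw [h, orderOf_one] at hg
      norm_num at hg
    obtain ⟨u, hu, v, hv, k, hk⟩ := L2 g
    have hgN : g ∈ U ⊔ V := by
      have hπu : QuotientGroup.mk' (U ⊔ V) u = 1 :=
        (QuotientGroup.eq_one_iff u).mpr (mem_sup_left hu)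
      have hπv : QuotientGroup.mk' (U ⊔ V) v = 1 :=
        (QuotientGroup.eq_one_iff v).mpr (mem_sup_right hv)
      have hπg : QuotientGroup.mk' (U ⊔ V) g = QuotientGroup.mk' (U ⊔ V) (z ^ k) := by
        rw [hk, map_mul, map_mul, hπu, hπv, one_mul, one_mul]
      have h4 : ((z ^ k) ^ (3:ℕ)) = (z ^ (3:ℕ)) ^ k := by
        rw [← zpow_natCast (z ^ k) 3, ← zpow_natCast z 3, ← zpow_mul, ← zpow_mul, mul_comm]
      have h3 : QuotientGroup.mk' (U ⊔ V) g ^ 3 = 1 := by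
        rw [hπg, ← map_pow, h4, hz3, one_zpow, map_one]
      have h2 : QuotientGroup.mk' (U ⊔ V) g ^ 2 = 1 := by
        rw [← map_pow, hg2, map_one]
      have h1 : QuotientGroup.mk' (U ⊔ V) g = 1 := by
        calc QuotientGroup.mk' (U ⊔ V) g
            = QuotientGroup.mk' (U ⊔ V) g ^ 3 := by rw [pow_succ, h2, one_mul]
          _ = 1 := h3
      exact (QuotientGroup.eq_one_iff g).mp h1
    obtain ⟨u', hu', v', hv', he⟩ := L1 g hgN
    have hu3 : u' ^ 3 = 1 := orderOf_dvd_iff_pow_eq_one.mp (hUz3 u' (mem_sup_left hu'))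
    have hcuv : Commute u' v' := hcomm u' hu' v' hv'
    have hu2 : u' ^ 2 = 1 := by
      have h5 : g ^ 2 = u' ^ 2 * v' ^ 2 := by rw [he]; exact Commute.mul_pow hcuv 2
      have h6 := hV2 v' hv'
      rw [hg2, h6, mul_one] at h5
      exact h5.symm
    have hu1 : u' = 1 := by
      calc u' = u' ^ 3 * (u' ^ 2)⁻¹ := by group
        _ = 1 := by rw [hu3, hu2]; simp
    have hgv : g = v' := by rw [he, hu1, one_mul]
    exact ⟨by rw [hgv]; exact hv', hg1⟩
  obtain ⟨v₀, hv₀V, hv₀1⟩ := (Subgroup.bot_or_exists_ne_one V).resolve_left hVnt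
  have hv₀2 : orderOf v₀ = 2 := by
    haveI : Fact (Nat.Prime 2) := ⟨Nat.prime_two⟩
    exact orderOf_eq_prime (hV2 v₀ hv₀V) hv₀1
  constructor
  · obtain ⟨c, hc⟩ : 2 ∣ Nat.card G := hv₀2 ▸ orderOf_dvd_natCard v₀
    exact ⟨c, by omega⟩
  intro x y hx
  obtain ⟨hxV, hx1⟩ := hmemV2 x hx
  have hx2 : x ^ 2 = 1 := by rw [← hx]; exact pow_orderOf_eq_one x
  have hxx : x * x = 1 := by rw [← pow_two]; exact hx2
  obtain ⟨u, hu, v, hv, k, hyk⟩ := L2 y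
  by_cases hk3 : (3:ℤ) ∣ k
  · -- abelian case
    obtain ⟨m, rfl⟩ := hk3
    have hzk : z ^ (3 * m) = 1 := by rw [zpow_mul, hz3', one_zpow]
    rw [hzk, mul_one] at hyk
    have hcxy : Commute x y := by
      have h1 : x * u = u * x := (hcomm u hu x hxV).symm
      have h2 : x * v = v * x := hVcomm x hxV v hv
      show x * y = y * x
      rw [hyk]
      calc x * (u * v) = (x * u) * v := by rw [mul_assoc]
        _ = u * (x * v) := by rw [h1, mul_assoc]
        _ = u * v * x := by rw [h2, ← mul_assoc]
    have hcuv : Commute u v := hcomm u hu v hv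
    have hu3 : u ^ 3 = 1 := orderOf_dvd_iff_pow_eq_one.mp (hUz3 u (mem_sup_left hu))
    have hv2 : v ^ 2 = 1 := hV2 v hv
    have hy6 : y ^ 6 = 1 := by
      have h5 : u ^ (6:ℕ) = 1 := by rw [show (6:ℕ) = 3*2 from rfl, pow_mul, hu3, one_pow]
      have h6 : v ^ (6:ℕ) = 1 := by rw [show (6:ℕ) = 2*3 from rfl, pow_mul, hv2, one_pow]
      rw [hyk, Commute.mul_pow hcuv, h5, h6, one_mul]
    have hdy : orderOf y ∣ 6 := orderOf_dvd_iff_pow_eq_one.mpr hy6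
    have hcases : ∀ d : ℕ, d ∣ 6 → 0 < d → d = 1 ∨ d = 2 ∨ d = 3 ∨ d = 6 := by
      intro d hdvd hpos
      have hle : d ≤ 6 := Nat.le_of_dvd (by norm_num) hdvd
      interval_cases d
      · tauto
      · tauto
      · tauto
      · norm_num at hdvd
      · norm_num at hdvd
      · tauto
    rcases hcases _ hdy (orderOf_pos y) with h | h | h | h
    · -- y = 1
      have hy1 : y = 1 := orderOf_eq_one_iff.mp h
      left
      have hcl : closure ({x, y} : Set G) = zpowers x := by
        rw [hy1]
        apply le_antisymm
        · rw [closure_le]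
          intro w hw
          simp only [Set.mem_insert_iff, Set.mem_singleton_iff] at hw
          rcases hw with rfl | rfl
          · exact mem_zpowers w
          · exact one_mem _
        · rw [zpowers_le]
          exact subset_closure (by simp)
      obtain ⟨e⟩ := cyclic_iso 2 x hx
      exact ⟨(MulEquiv.subgroupCongr hcl).trans e⟩
    · -- orderOf y = 2
      by_cases hxy : y = x
      · left
        have hcl : closure ({x, y} : Set G) = zpowers x := by
          rw [hxy, Set.pair_eq_singleton, ← zpowers_eq_closure]
        obtain ⟨e⟩ := cyclic_iso 2 x hx
        exact ⟨(MulEquiv.subgroupCongr hcl).trans e⟩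
      · right; left
        apply prod_iso 2 x y hx h hcxy
        intro g hga hgb
        obtain ⟨r, hr0, hr2, hre⟩ := mem_zpowers_elim hx (by norm_num) g hga
        interval_cases r
        · simpa using hre
        · rw [zpow_one] at hre
          rw [hre] at hgb
          obtain ⟨s, hs0, hs2, hse⟩ := mem_zpowers_elim h (by norm_num) x hgb
          interval_cases s
          · rw [zpow_zero] at hse
            exact absurd hse hx1
          · rw [zpow_one] at hse
            exact absurd hse.symm hxy
    · -- orderOf y = 3
      right; right; right; left
      have hco23 : Nat.Coprime (orderOf x) (orderOf y) := by
        rw [hx, h]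
        decide
      have ho6 : orderOf (x * y) = 6 := by
        rw [Commute.orderOf_mul_eq_mul_orderOf_of_coprime hcxy hco23, hx, h]
      have hy3' : y ^ 3 = 1 := by rw [← h]; exact pow_orderOf_eq_one y
      have hx3 : x ^ 3 = x := by
        rw [show (3:ℕ) = 2+1 from rfl, pow_succ, hx2, one_mul]
      have hxmem : x ∈ zpowers (x * y) := by
        have h7 : (x * y) ^ 3 = x := by
          rw [Commute.mul_pow hcxy, hy3', mul_one, hx3]
        have h7' := pow_mem (mem_zpowers (x * y)) 3
        rw [h7] at h7'
        exact h7'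
      have hymem : y ∈ zpowers (x * y) := by
        have h8 : x⁻¹ * (x * y) = y := by group
        have h8' := mul_mem (inv_mem hxmem) (mem_zpowers (x * y))
        rw [h8] at h8'
        exact h8'
      have hcl : closure ({x, y} : Set G) = zpowers (x * y) := by
        apply le_antisymm
        · rw [closure_le]
          intro w hw
          simp only [Set.mem_insert_iff, Set.mem_singleton_iff] at hw
          rcases hw with rfl | rfl
          · exact hxmem
          · exact hymem
        · rw [zpowers_le]
          exact mul_mem (subset_closure (by simp)) (subset_closure (by simp))
      obtain ⟨e⟩ := cyclic_iso 6 (x * y) ho6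
      exact ⟨(MulEquiv.subgroupCongr hcl).trans e⟩
    · -- orderOf y = 6
      by_cases hxy3 : x = y ^ 3
      · right; right; right; left
        have hcl : closure ({x, y} : Set G) = zpowers y := by
          apply le_antisymm
          · rw [closure_le]
            intro w hw
            simp only [Set.mem_insert_iff, Set.mem_singleton_iff] at hw
            rcases hw with rfl | rfl
            · rw [hxy3]
              exact pow_mem (mem_zpowers _) 3
            · exact mem_zpowers _
          · rw [zpowers_le]
            exact subset_closure (by simp)
        obtain ⟨e⟩ := cyclic_iso 6 y h
        exact ⟨(MulEquiv.subgroupCongr hcl).trans e⟩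
      · right; right; right; right; right; left
        have hcy3 : Commute x (y ^ 3) := hcxy.pow_right 3
        have hy3sq : y ^ 3 * y ^ 3 = 1 := by
          rw [← pow_add]
          exact hy6
        have ha2 : (x * y ^ 3) * (x * y ^ 3) = 1 := by
          calc (x * y ^ 3) * (x * y ^ 3) = x * (y ^ 3 * x) * y ^ 3 := by group
            _ = x * (x * y ^ 3) * y ^ 3 := by rw [← hcy3]
            _ = (x * x) * (y ^ 3 * y ^ 3) := by group
            _ = 1 := by rw [hxx, hy3sq, mul_one]
        have ha1 : x * y ^ 3 ≠ 1 := by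
          intro hcon
          apply hxy3
          have h9 : x = (y ^ 3)⁻¹ := eq_inv_of_mul_eq_one_left hcon
          rw [h9]
          exact inv_eq_of_mul_eq_one_right hy3sq
        have hao : orderOf (x * y ^ 3) = 2 := by
          haveI : Fact (Nat.Prime 2) := ⟨Nat.prime_two⟩
          exact orderOf_eq_prime (by rw [pow_two]; exact ha2) ha1
        have hcay : Commute (x * y ^ 3) y := hcxy.mul_left ((Commute.refl y).pow_left 3)
        have hdisj : ∀ g, g ∈ zpowers (x * y ^ 3) → g ∈ zpowers y → g = 1 := by
          intro g hga hgb
          obtain ⟨r, hr0, hr2, hre⟩ := mem_zpowers_elim hao (by norm_num) g hga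
          interval_cases r
          · simpa using hre
          · rw [zpow_one] at hre
            rw [hre] at hgb
            obtain ⟨s, hs0, hs6, hse⟩ := mem_zpowers_elim h (by norm_num) _ hgb
            have h9 : (y : G) ^ (2*s) = 1 := by
              have h10 : ((y:G) ^ s) * (y ^ s) = 1 := by rw [← hse]; exact ha2
              rw [show (2*s : ℤ) = s + s by ring, zpow_add, h10]
            have h10 : ((6:ℤ)) ∣ 2*s := by
              have h11 := orderOf_dvd_iff_zpow_eq_one.mpr h9
              rwa [h] at h11
            rcases (show s = 0 ∨ s = 3 by omega) with rfl | rfl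
            · rw [zpow_zero] at hse
              exact absurd hse ha1
            · rw [show (3:ℤ) = ((3:ℕ):ℤ) from rfl, zpow_natCast] at hse
              have h12 : x = 1 := mul_right_cancel (hse.trans (one_mul _).symm)
              exact absurd h12 hx1
        have hcl : closure ({x, y} : Set G) = closure ({x * y ^ 3, y} : Set G) := by
          apply le_antisymm
          · rw [closure_le]
            intro w hw
            simp only [Set.mem_insert_iff, Set.mem_singleton_iff] at hw
            rcases hw with h' | h' <;> rw [h']
            · have h12 : (x * y ^ 3) * (y ^ 3)⁻¹ = x := by group
              have h12' := mul_mem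
                (subset_closure (show x * y ^ 3 ∈ ({x * y ^ 3, y} : Set G) by simp))
                (inv_mem (pow_mem
                  (subset_closure (show y ∈ ({x * y ^ 3, y} : Set G) by simp)) 3))
              rw [h12] at h12'
              exact h12'
            · exact subset_closure (by simp)
          · rw [closure_le]
            intro w hw
            simp only [Set.mem_insert_iff, Set.mem_singleton_iff] at hw
            rcases hw with rfl | rfl
            · exact mul_mem (subset_closure (by simp)) (pow_mem (subset_closure (by simp)) 3)
            · exact subset_closure (by simp)
        obtain ⟨e⟩ := prod_iso 6 (x * y ^ 3) y hao h hcay hdisj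
        exact ⟨(MulEquiv.subgroupCongr hcl).trans e⟩
  · -- A4 case
    right; right; right; right; right; right
    have hcs : ∀ p q : G, p * q = q * p → p * q * p⁻¹ = q := by
      intro p q hpq
      rw [hpq]
      group
    have hconjy : ∀ a ∈ V, y * a * y⁻¹ = z ^ k * a * (z ^ k)⁻¹ := by
      intro a ha
      have hbV : z ^ k * a * (z ^ k)⁻¹ ∈ V := hconjV k a ha
      rw [hyk]
      calc (u * v * z ^ k) * a * (u * v * z ^ k)⁻¹
          = u * (v * (z ^ k * a * (z ^ k)⁻¹) * v⁻¹) * u⁻¹ := by group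
        _ = u * (z ^ k * a * (z ^ k)⁻¹) * u⁻¹ := by
            rw [hcs v _ (hVcomm v hv _ hbV)]
        _ = z ^ k * a * (z ^ k)⁻¹ := hcs u _ (hcomm u hu _ hbV)
    have htdef : y * x * y⁻¹ = z ^ k * x * (z ^ k)⁻¹ := hconjy x hxV
    have htV : y * x * y⁻¹ ∈ V := by
      rw [htdef]
      exact hconjV k x hxV
    have hy3 : y ^ 3 = 1 := by
      obtain ⟨w, hwdef⟩ : ∃ w, w = u * z ^ k := ⟨_, rfl⟩
      obtain ⟨v₂, hv₂def⟩ : ∃ p, p = (z ^ k)⁻¹ * v * z ^ k := ⟨_, rfl⟩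
      have hv₂V : v₂ ∈ V := by
        rw [hv₂def]
        have := hconjV (-k) v hv
        simpa [zpow_neg] using this
      have hw3 : w ^ 3 = 1 := by
        rw [hwdef]
        exact orderOf_dvd_iff_pow_eq_one.mp (hUz3 _
          (mul_mem (mem_sup_left hu) (mem_sup_right (zpow_mem (mem_zpowers z) k))))
      have hform : y = w * v₂ := by rw [hwdef, hv₂def, hyk]; group
      have hwc : ∀ a ∈ V, w⁻¹ * a * w = z ^ (-k) * a * (z ^ (-k))⁻¹ := by
        intro a ha
        have hcm : u⁻¹ * a * u = a := by
          have h1 : a * u = u * a := (hcomm u hu a ha).symm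
          calc u⁻¹ * a * u = u⁻¹ * (a * u) := by rw [mul_assoc]
            _ = u⁻¹ * (u * a) := by rw [h1]
            _ = a := by group
        rw [hwdef]
        calc (u * z ^ k)⁻¹ * a * (u * z ^ k)
            = (z ^ k)⁻¹ * (u⁻¹ * a * u) * z ^ k := by group
          _ = (z ^ k)⁻¹ * a * z ^ k := by rw [hcm]
          _ = z ^ (-k) * a * (z ^ (-k))⁻¹ := by rw [zpow_neg, inv_inv]
      have hc1V : z ^ (-k) * v₂ * (z ^ (-k))⁻¹ ∈ V := hconjV (-k) _ hv₂V
      have hc1 : w⁻¹ * v₂ * w = z ^ (-k) * v₂ * (z ^ (-k))⁻¹ := hwc v₂ hv₂V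
      have hc2 : w⁻¹ * (w⁻¹ * v₂ * w) * w
          = z ^ (-k) * (z ^ (-k) * v₂ * (z ^ (-k))⁻¹) * (z ^ (-k))⁻¹ := by
        rw [hc1]
        exact hwc _ hc1V
      have hc2' : w⁻¹ * (w⁻¹ * v₂ * w) * w = z ^ (2*(-k)) * v₂ * (z ^ (2*(-k)))⁻¹ := by
        rw [hc2, show (2*(-k) : ℤ) = (-k) + (-k) by ring, zpow_add]
        group
      have hp3 : ∀ a : G, a ^ 3 = a * a * a := fun a => by rw [pow_succ, pow_two]
      have hcube : y ^ 3 = w ^ 3 * ((w⁻¹ * (w⁻¹ * v₂ * w) * w) * (w⁻¹ * v₂ * w) * v₂) := by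
        rw [hform, hp3, hp3]
        group
      have hmk : ¬ ((3:ℤ) ∣ -k) := fun hdvd => hk3 (Int.dvd_neg.mp hdvd)
      have horbs := horb (-k) hmk v₂ hv₂V
      have hBV : z ^ (2*(-k)) * v₂ * (z ^ (2*(-k)))⁻¹ ∈ V := hconjV _ _ hv₂V
      rw [hcube, hw3, one_mul, hc2', hc1]
      calc (z ^ (2*(-k)) * v₂ * (z ^ (2*(-k)))⁻¹) * (z ^ (-k) * v₂ * (z ^ (-k))⁻¹) * v₂
          = v₂ * ((z ^ (2*(-k)) * v₂ * (z ^ (2*(-k)))⁻¹) * (z ^ (-k) * v₂ * (z ^ (-k))⁻¹)) := by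
            rw [← hVcomm v₂ hv₂V _ (mul_mem hBV hc1V), mul_assoc]
        _ = v₂ * ((z ^ (-k) * v₂ * (z ^ (-k))⁻¹) * (z ^ (2*(-k)) * v₂ * (z ^ (2*(-k)))⁻¹)) := by
            rw [hVcomm _ hBV _ hc1V]
        _ = v₂ * (z ^ (-k) * v₂ * (z ^ (-k))⁻¹) * (z ^ (2*(-k)) * v₂ * (z ^ (2*(-k)))⁻¹) :=
            (mul_assoc _ _ _).symm
        _ = 1 := horbs
    have hzxne : z * x * z⁻¹ = x → False := by
      intro h1
      apply hx1
      apply hCV x hxV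
      have h2 : z * x = x * z := by
        calc z * x = (z * x * z⁻¹) * z := by group
          _ = x * z := by rw [h1]
      exact h2.symm
    have hk30 : k % 3 = 1 ∨ k % 3 = 2 := by
      have hm0 : k % 3 ≠ 0 := fun hcon => hk3 (Int.dvd_of_emod_eq_zero hcon)
      omega
    have hxtne : y * x * y⁻¹ ≠ x := by
      rw [htdef]
      intro hcon
      rcases hk30 with hk | hk
      · apply hzxne
        rw [zred k, hk, zpow_one] at hcon
        exact hcon
      · rw [zred k, hk] at hcon
        apply hzxne
        have h2 : z * (z ^ (2:ℤ) * x * (z ^ (2:ℤ))⁻¹) * z⁻¹ = x := by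
          have h3 : z * (z ^ (2:ℤ) * x * (z ^ (2:ℤ))⁻¹) * z⁻¹
              = z ^ (3:ℤ) * x * (z ^ (3:ℤ))⁻¹ := by group
          rw [h3, hz3']
          simp
        rw [hcon] at h2
        exact h2
    have hcoxt : x * (y * x * y⁻¹) = (y * x * y⁻¹) * x := hVcomm x hxV _ htV
    have hytx : y * (y * x * y⁻¹) * y⁻¹ = x * (y * x * y⁻¹) := by
      have h1 : y * (y * x * y⁻¹) * y⁻¹ = z ^ k * (y * x * y⁻¹) * (z ^ k)⁻¹ := hconjy _ htV
      have h2 : z ^ k * (y * x * y⁻¹) * (z ^ k)⁻¹ = z ^ (2*k) * x * (z ^ (2*k))⁻¹ := by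
        rw [htdef, show (2*k : ℤ) = k + k by ring, zpow_add]
        group
      have h3 := horb k hk3 x hxV
      rw [h1, h2, htdef]
      have hbV : z ^ k * x * (z ^ k)⁻¹ ∈ V := hconjV k x hxV
      have h4 : z ^ (2*k) * x * (z ^ (2*k))⁻¹ = (z ^ k * x * (z ^ k)⁻¹)⁻¹ * x⁻¹ := by
        have h6 := eq_inv_of_mul_eq_one_right h3
        rw [h6, mul_inv_rev]
      rw [h4, hVinv _ hbV, hVinv x hxV]
      exact (hVcomm x hxV _ hbV).symm
    exact isoA4 x y hxx hx1 hy3 hxtne hcoxt hytx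
end

section
/- Let G be a finite group of even order such that every element of G of order 2 lies in the center Z(G), and every element of G has order belonging to {1, 2, 3, 4, 6}. Then G has property (P). -/
open Subgroup

section aux
variable {G : Type*} [Group G]

/-- The key product case: if `x` has order 2, commutes with `y`, and lies outside
`⟨y⟩`, then `⟨x, y⟩ ≅ ℤ/2 × ℤ/n` where `n = orderOf y`. -/
noncomputable def prodCase (x y : G) (hx : orderOf x = 2) (hc : Commute x y)
    (hn : 0 < orderOf y) (hdisj : x ∉ Subgroup.zpowers y) :
    ↥(Subgroup.closure {x, y}) ≃*
      Multiplicative (ZMod 2) × Multiplicative (ZMod (orderOf y)) := by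
  haveI : NeZero (orderOf y) := ⟨hn.ne'⟩
  have hx2 : ∀ k, x ^ (k % 2) = x ^ k := fun k => by
    conv_lhs => rw [← hx]
    exact pow_mod_orderOf x k
  let f : Multiplicative (ZMod 2) × Multiplicative (ZMod (orderOf y)) →* G :=
    MonoidHom.mk' (fun p => x ^ (p.1.toAdd.val) * y ^ (p.2.toAdd.val)) (by
      rintro ⟨a, b⟩ ⟨c, d⟩
      show x ^ (a.toAdd + c.toAdd).val * y ^ (b.toAdd + d.toAdd).val
          = (x ^ a.toAdd.val * y ^ b.toAdd.val) * (x ^ c.toAdd.val * y ^ d.toAdd.val)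
      rw [ZMod.val_add, ZMod.val_add, hx2, pow_mod_orderOf,
        (hc.symm.pow_pow b.toAdd.val c.toAdd.val).mul_mul_mul_comm,
        ← pow_add, ← pow_add])
  have hinj : Function.Injective f := by
    rw [injective_iff_map_eq_one]
    rintro ⟨a, b⟩ h
    have h' : x ^ a.toAdd.val * y ^ b.toAdd.val = 1 := h
    have hav : a.toAdd.val < 2 := ZMod.val_lt _
    interval_cases hval : a.toAdd.val
    · rw [pow_zero, one_mul] at h'
      have hb : b.toAdd.val = 0 :=
        Nat.eq_zero_of_dvd_of_lt (orderOf_dvd_of_pow_eq_one h') (ZMod.val_lt _)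
      have ha0 : a = 1 := by
        have : a.toAdd = 0 := (ZMod.val_eq_zero _).mp hval
        simpa using this
      have hb0 : b = 1 := by
        have : b.toAdd = 0 := (ZMod.val_eq_zero _).mp hb
        simpa using this
      rw [ha0, hb0]; rfl
    · exfalso
      rw [pow_one] at h'
      exact hdisj (by
        have : x = (y ^ b.toAdd.val)⁻¹ := eq_inv_of_mul_eq_one_left h'
        rw [this]
        exact (Subgroup.zpowers y).inv_mem (Subgroup.pow_mem _ (Subgroup.mem_zpowers y) _))
  have hrange : f.range = Subgroup.closure {x, y} := by
    apply le_antisymm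
    · rintro _ ⟨⟨a, b⟩, rfl⟩
      exact mul_mem
        (Subgroup.pow_mem _ (Subgroup.subset_closure (by simp)) _)
        (Subgroup.pow_mem _ (Subgroup.subset_closure (by simp)) _)
    · have hxmem : x ∈ f.range := ⟨(Multiplicative.ofAdd 1, 1), by
        show x ^ (1 : ZMod 2).val * y ^ (0 : ZMod (orderOf y)).val = x
        rw [ZMod.val_one, ZMod.val_zero, pow_one, pow_zero, mul_one]⟩
      have hymem : y ∈ f.range := ⟨(1, Multiplicative.ofAdd 1), by
        show x ^ (0 : ZMod 2).val * y ^ (1 : ZMod (orderOf y)).val = y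
        rw [ZMod.val_zero, pow_zero, one_mul, ZMod.val_one_eq_one_mod,
          pow_mod_orderOf, pow_one]⟩
      rw [Subgroup.closure_le]
      rintro z (rfl | rfl)
      · exact hxmem
      · exact hymem
  exact ((MonoidHom.ofInjective hinj).trans (MulEquiv.subgroupCongr hrange)).symm

end aux


/-- a finite group of even order in which every involution is central
and every element has order in `{1, 2, 3, 4, 6}` has property (P). -/
theorem stmt16 (G : Type*) [Group G] [Finite G] (heven : Even (Nat.card G))
    (hcen : ∀ x : G, orderOf x = 2 → x ∈ Subgroup.center G)
    (hord : ∀ x : G, orderOf x ∈ ({1, 2, 3, 4, 6} : Set ℕ)) :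
    PropertyP G := by
  refine ⟨heven, fun x y hx => ?_⟩
  have hc : Commute x y := ((Subgroup.mem_center_iff.mp (hcen x hx)) y).symm
  have hn : 0 < orderOf y := orderOf_pos y
  have hordy := hord y
  simp only [Set.mem_insert_iff, Set.mem_singleton_iff] at hordy
  by_cases hmem : x ∈ Subgroup.zpowers y
  · -- cyclic case : ⟨x,y⟩ = ⟨y⟩
    have hcl : Subgroup.closure {x, y} = Subgroup.zpowers y := by
      apply le_antisymm
      · rw [Subgroup.closure_le]
        rintro z (rfl | rfl)
        · exact hmem
        · exact Subgroup.mem_zpowers _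
      · exact Subgroup.zpowers_le.mpr (Subgroup.subset_closure (by simp))
    haveI hcy : IsCyclic ↥(Subgroup.closure {x, y}) := by
      rw [hcl]
      refine ⟨⟨y, Subgroup.mem_zpowers y⟩, ?_⟩
      rintro ⟨z, k, hk⟩
      exact ⟨k, Subtype.ext (by simpa using hk)⟩
    have hcard : Nat.card ↥(Subgroup.closure {x, y}) = orderOf y := by
      rw [hcl, Nat.card_zpowers]
    have h2 : 2 ∣ orderOf y := by
      rw [← hx]
      apply orderOf_dvd_of_pow_eq_one
      obtain ⟨k, hk⟩ := hmem
      rw [← hk, ← zpow_natCast, ← zpow_mul, mul_comm, zpow_mul, zpow_natCast,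
        pow_orderOf_eq_one, one_zpow]
    have key : ∀ n : ℕ, 0 < n → orderOf y = n →
        Nonempty (↥(Subgroup.closure {x, y}) ≃* Multiplicative (ZMod n)) := by
      intro n hn0 hn'
      haveI : NeZero n := ⟨hn0.ne'⟩
      refine ⟨mulEquivOfCyclicCardEq ?_⟩
      rw [hcard, hn', Nat.card_eq_fintype_card, Fintype.card_multiplicative, ZMod.card]
    rcases hordy with h | h | h | h | h
    · exact absurd (h ▸ h2) (by norm_num)
    · exact Or.inl (key 2 (by norm_num) h)
    · exact absurd (h ▸ h2) (by norm_num)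
    · exact Or.inr (Or.inr (Or.inl (key 4 (by norm_num) h)))
    · exact Or.inr (Or.inr (Or.inr (Or.inl (key 6 (by norm_num) h))))
  · -- product case
    have e := prodCase x y hx hc hn hmem
    rcases hordy with h | h | h | h | h
    · -- y = 1
      rw [h] at e
      exact Or.inl ⟨e.trans MulEquiv.prodUnique⟩
    · rw [h] at e
      exact Or.inr (Or.inl ⟨e⟩)
    · -- ZMod 2 × ZMod 3 ≅ ZMod 6
      rw [h] at e
      have c : Multiplicative (ZMod 6) ≃* Multiplicative (ZMod 2) × Multiplicative (ZMod 3) :=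
        (AddEquiv.toMultiplicative
          (ZMod.chineseRemainder (by norm_num : Nat.Coprime 2 3)).toAddEquiv).trans
          (MulEquiv.prodMultiplicative _ _)
      exact Or.inr (Or.inr (Or.inr (Or.inl ⟨e.trans c.symm⟩)))
    · rw [h] at e
      exact Or.inr (Or.inr (Or.inr (Or.inr (Or.inl ⟨e⟩))))
    · rw [h] at e
      exact Or.inr (Or.inr (Or.inr (Or.inr (Or.inr (Or.inl ⟨e⟩)))))
end

section
/- Let G be a finite group with a normal 2-subgroup K and an element z ∈ G of order 3 such that G = ⟨K, z⟩, K ∩ ⟨z⟩ = 1, every element of K has order dividing 4, Ω₁(K) ≤ Z(K), and C_K(z) = 1. Then K contains no subgroup isomorphic to the quaternion group Q₈ of order 8. -/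
/-- `Ω₁(H)`: the subgroup generated by all elements of order 2. -/
def omegaOne (G : Type*) [Group G] : Subgroup G :=
  Subgroup.closure {x : G | orderOf x = 2}

/-- An auxiliary commutator. -/
def comm' {G : Type*} [Group G] (a b : G) : G := a⁻¹ * b⁻¹ * a * b

lemma comm'_def {G : Type*} [Group G] (a b : G) : comm' a b = a⁻¹ * b⁻¹ * a * b := rfl

lemma mul_comm'_eq {G : Type*} [Group G] (a b : G) : a * b = b * a * comm' a b := by
  rw [comm'_def]; group

lemma comm'_inv {G : Type*} [Group G] (a b : G) : comm' b a = (comm' a b)⁻¹ := by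
  rw [comm'_def, comm'_def]; group

lemma comm'_eq_one {G : Type*} [Group G] {a b : G} (h : a * b = b * a) : comm' a b = 1 := by
  have h2 := mul_comm'_eq a b
  rw [h] at h2
  exact mul_eq_left.mp h2.symm

lemma comm'_one_right {G : Type*} [Group G] (a : G) : comm' a 1 = 1 := by
  rw [comm'_def]; group

/-- if `G = K ⋊ ⟨z⟩` is a Frobenius group with kernel a normal
2-subgroup `K` of exponent dividing 4 satisfying `Ω₁(K) ≤ Z(K)` and complement
`⟨z⟩ ≅ ℤ/3` acting without nontrivial fixed points, then `K` has no subgroup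
isomorphic to the quaternion group `Q₈`. -/
theorem stmt17 (G : Type*) [Group G] [Finite G] (K : Subgroup G) (z : G)
    (hKnormal : K.Normal) (hK2 : IsPGroup 2 ↥K) (hz : orderOf z = 3)
    (hgen : K ⊔ Subgroup.zpowers z = ⊤)
    (hint : K ⊓ Subgroup.zpowers z = ⊥)
    (hexp : ∀ k ∈ K, orderOf k ∣ 4)
    (hOm : omegaOne ↥K ≤ Subgroup.center ↥K)
    (hfpf : ∀ k ∈ K, k * z = z * k → k = 1) :
    ∀ H : Subgroup G, H ≤ K → ¬ Nonempty (↥H ≃* QuaternionGroup 2) := by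
  -- basic facts
  have hz3 : z ^ 3 = 1 := by rw [← hz]; exact pow_orderOf_eq_one z
  have hmemf : ∀ g ∈ K, z * g * z⁻¹ ∈ K := fun g hg => hKnormal.conj_mem g hg z
  have hpow4 : ∀ g ∈ K, g ^ 4 = 1 := fun g hg => orderOf_dvd_iff_pow_eq_one.mp (hexp g hg)
  -- elements of K of square one are central in K
  have hcen1 : ∀ w ∈ K, w ^ 2 = 1 → ∀ k ∈ K, w * k = k * w := by
    intro w hw hw2 k hk
    have hW2 : (⟨w, hw⟩ : ↥K) ^ 2 = 1 := by apply Subtype.ext; simpa using hw2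
    have hWc : (⟨w, hw⟩ : ↥K) ∈ Subgroup.center ↥K := by
      by_cases hW1 : (⟨w, hw⟩ : ↥K) = 1
      · rw [hW1]; exact Subgroup.one_mem _
      · have h2 : orderOf (⟨w, hw⟩ : ↥K) = 2 := orderOf_eq_prime hW2 hW1
        exact hOm (Subgroup.subset_closure h2)
    have h3 := (Subgroup.mem_center_iff.mp hWc) ⟨k, hk⟩
    simpa using (congrArg Subtype.val h3).symm
  -- squares are central in K
  have hsqcen : ∀ g ∈ K, ∀ k ∈ K, g ^ 2 * k = k * g ^ 2 := by
    intro g hg k hk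
    refine hcen1 (g ^ 2) (pow_mem hg 2) ?_ k hk
    rw [← pow_mul]
    exact hpow4 g hg
  -- commutators are central in K
  have hccen : ∀ a ∈ K, ∀ b ∈ K, ∀ k ∈ K, comm' a b * k = k * comm' a b := by
    intro a ha b hb k hk
    have hba : (b * a)⁻¹ ∈ K := inv_mem (mul_mem hb ha)
    have hswap : b⁻¹ * a ^ 2 = a ^ 2 * b⁻¹ := (hsqcen a ha b⁻¹ (inv_mem hb)).symm
    have e1 : ((b * a)⁻¹) ^ 2 * a ^ 2 * b ^ 2
        = a⁻¹ * b⁻¹ * a⁻¹ * (b⁻¹ * a ^ 2) * b ^ 2 := by simp only [pow_two]; group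
    rw [hswap] at e1
    have e2 : a⁻¹ * b⁻¹ * a⁻¹ * (a ^ 2 * b⁻¹) * b ^ 2 = comm' a b := by
      rw [comm'_def]; group
    have e0 : comm' a b = ((b * a)⁻¹) ^ 2 * a ^ 2 * b ^ 2 := by rw [e1, e2]
    have c1 : ((b * a)⁻¹) ^ 2 * k = k * ((b * a)⁻¹) ^ 2 := hsqcen _ hba k hk
    have c2 : a ^ 2 * k = k * a ^ 2 := hsqcen a ha k hk
    have c3 : b ^ 2 * k = k * b ^ 2 := hsqcen b hb k hk
    rw [e0]
    calc ((b * a)⁻¹) ^ 2 * a ^ 2 * b ^ 2 * k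
        = ((b * a)⁻¹) ^ 2 * a ^ 2 * (b ^ 2 * k) := by group
      _ = ((b * a)⁻¹) ^ 2 * a ^ 2 * (k * b ^ 2) := by rw [c3]
      _ = ((b * a)⁻¹) ^ 2 * (a ^ 2 * k) * b ^ 2 := by group
      _ = ((b * a)⁻¹) ^ 2 * (k * a ^ 2) * b ^ 2 := by rw [c2]
      _ = (((b * a)⁻¹) ^ 2 * k) * a ^ 2 * b ^ 2 := by group
      _ = (k * ((b * a)⁻¹) ^ 2) * a ^ 2 * b ^ 2 := by rw [c1]
      _ = k * (((b * a)⁻¹) ^ 2 * a ^ 2 * b ^ 2) := by group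
  -- bilinearity of commutators
  have hbil2 : ∀ a ∈ K, ∀ b1 ∈ K, ∀ b2 ∈ K,
      comm' a (b1 * b2) = comm' a b2 * comm' a b1 := by
    intro a ha b1 hb1 b2 hb2
    have E : (b1 * b2) * a * comm' a (b1 * b2)
        = (b1 * b2) * a * (comm' a b2 * comm' a b1) := by
      rw [← mul_comm'_eq a (b1 * b2)]
      calc a * (b1 * b2) = (a * b1) * b2 := by group
        _ = (b1 * a * comm' a b1) * b2 := by rw [mul_comm'_eq a b1]
        _ = b1 * a * (comm' a b1 * b2) := by group
        _ = b1 * a * (b2 * comm' a b1) := by rw [hccen a ha b1 hb1 b2 hb2]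
        _ = b1 * (a * b2) * comm' a b1 := by group
        _ = b1 * (b2 * a * comm' a b2) * comm' a b1 := by rw [mul_comm'_eq a b2]
        _ = (b1 * b2) * a * (comm' a b2 * comm' a b1) := by group
    exact mul_left_cancel E
  have hbil1 : ∀ a1 ∈ K, ∀ a2 ∈ K, ∀ b ∈ K,
      comm' (a1 * a2) b = comm' a1 b * comm' a2 b := by
    intro a1 ha1 a2 ha2 b hb
    have E : b * (a1 * a2) * comm' (a1 * a2) b
        = b * (a1 * a2) * (comm' a1 b * comm' a2 b) := by
      rw [← mul_comm'_eq (a1 * a2) b]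
      calc (a1 * a2) * b = a1 * (a2 * b) := by group
        _ = a1 * (b * a2 * comm' a2 b) := by rw [mul_comm'_eq a2 b]
        _ = (a1 * b) * (a2 * comm' a2 b) := by group
        _ = (b * a1 * comm' a1 b) * (a2 * comm' a2 b) := by rw [mul_comm'_eq a1 b]
        _ = b * a1 * (comm' a1 b * a2) * comm' a2 b := by group
        _ = b * a1 * (a2 * comm' a1 b) * comm' a2 b := by rw [hccen a1 ha1 b hb a2 ha2]
        _ = b * (a1 * a2) * (comm' a1 b * comm' a2 b) := by group
    exact mul_left_cancel E
  have hcinv2 : ∀ a ∈ K, ∀ b ∈ K, comm' a b⁻¹ = (comm' a b)⁻¹ := by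
    intro a ha b hb
    have h := hbil2 a ha b hb b⁻¹ (inv_mem hb)
    rw [mul_inv_cancel, comm'_one_right] at h
    exact eq_inv_of_mul_eq_one_left h.symm
  -- the triple identity coming from the fixed-point-free action of z
  have hL1 : ∀ g ∈ K, g * (z * g * z⁻¹) * (z * (z * g * z⁻¹) * z⁻¹) = 1 := by
    have hinj : Function.Injective
        (fun k : ↥K => (⟨(k : G)⁻¹ * (z * k * z⁻¹),
          mul_mem (inv_mem k.2) (hmemf k k.2)⟩ : ↥K)) := by
      intro a b hab
      have h : ((a : G))⁻¹ * (z * a * z⁻¹) = ((b : G))⁻¹ * (z * b * z⁻¹) :=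
        congrArg Subtype.val hab
      have key : ((b : G) * (a : G)⁻¹) * z = z * ((b : G) * (a : G)⁻¹) := by
        calc ((b : G) * (a : G)⁻¹) * z
            = (b : G) * ((a : G)⁻¹ * (z * a * z⁻¹)) * (z * (a : G)⁻¹ * z⁻¹) * z := by group
          _ = (b : G) * ((b : G)⁻¹ * (z * b * z⁻¹)) * (z * (a : G)⁻¹ * z⁻¹) * z := by rw [h]
          _ = z * ((b : G) * (a : G)⁻¹) := by group
      have h1 := hfpf _ (mul_mem b.2 (inv_mem a.2)) key
      have hba : (b : G) = (a : G) := mul_inv_eq_one.mp h1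
      exact (Subtype.ext hba).symm
    have hsurj := Finite.injective_iff_surjective.mp hinj
    intro g hg
    obtain ⟨k, hk⟩ := hsurj ⟨g, hg⟩
    have hgk : g = (k : G)⁻¹ * (z * (k : G) * z⁻¹) := (congrArg Subtype.val hk).symm
    have key : ∀ w : G,
        (w⁻¹ * (z * w * z⁻¹)) * (z * (w⁻¹ * (z * w * z⁻¹)) * z⁻¹)
          * (z * (z * (w⁻¹ * (z * w * z⁻¹)) * z⁻¹) * z⁻¹) = 1 := by
      intro w
      have e : (w⁻¹ * (z * w * z⁻¹)) * (z * (w⁻¹ * (z * w * z⁻¹)) * z⁻¹)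
          * (z * (z * (w⁻¹ * (z * w * z⁻¹)) * z⁻¹) * z⁻¹)
          = w⁻¹ * (z * z * z) * w * (z * z * z)⁻¹ := by group
      have hz3' : z * z * z = 1 := by
        rw [← hz3]; simp [pow_succ]
      rw [e, hz3']; group
    rw [hgk]; exact key _
  -- every element of K commutes with its z-conjugate
  have hL2 : ∀ g ∈ K, g * (z * g * z⁻¹) = (z * g * z⁻¹) * g := by
    intro g hg
    have h1 := hL1 g hg
    have h2 := hL1 g⁻¹ (inv_mem hg)
    have h2' : g⁻¹ * (z * g * z⁻¹)⁻¹ * (z * (z * g * z⁻¹) * z⁻¹)⁻¹ = 1 := by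
      calc g⁻¹ * (z * g * z⁻¹)⁻¹ * (z * (z * g * z⁻¹) * z⁻¹)⁻¹
          = g⁻¹ * (z * g⁻¹ * z⁻¹) * (z * (z * g⁻¹ * z⁻¹) * z⁻¹) := by group
        _ = 1 := h2
    have e1 : z * (z * g * z⁻¹) * z⁻¹ = (g * (z * g * z⁻¹))⁻¹ :=
      (mul_eq_one_iff_inv_eq.mp h1).symm
    have e2 : (z * (z * g * z⁻¹) * z⁻¹)⁻¹ = (z * g * z⁻¹) * g := by
      have h3 := mul_eq_one_iff_inv_eq.mp h2'
      rw [← h3]; group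
    rw [← e2, e1]; group
  -- the symmetric relation: comm' a (f b) * comm' b (f a) = 1
  have hS : ∀ a ∈ K, ∀ b ∈ K,
      comm' a (z * b * z⁻¹) * comm' b (z * a * z⁻¹) = 1 := by
    intro a ha b hb
    have hfa := hmemf a ha
    have hfb := hmemf b hb
    have h1 : comm' (a * b) ((z * a * z⁻¹) * (z * b * z⁻¹)) = 1 := by
      have hab := comm'_eq_one (hL2 (a * b) (mul_mem ha hb))
      have e : z * (a * b) * z⁻¹ = (z * a * z⁻¹) * (z * b * z⁻¹) := by group
      rwa [e] at hab
    rw [hbil2 (a * b) (mul_mem ha hb) _ hfa _ hfb,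
        hbil1 a ha b hb _ hfb, hbil1 a ha b hb _ hfa,
        comm'_eq_one (hL2 b hb), comm'_eq_one (hL2 a ha)] at h1
    simpa using h1
  -- now take a subgroup isomorphic to Q₈ and derive a contradiction
  rintro H hHK ⟨e⟩
  have q1 : (QuaternionGroup.a 1 : QuaternionGroup 2) ^ 2 = (QuaternionGroup.xa 0) ^ 2 := by
    decide
  have q2 : (QuaternionGroup.xa 0 : QuaternionGroup 2)⁻¹ * QuaternionGroup.a 1
      * QuaternionGroup.xa 0 = (QuaternionGroup.a 1)⁻¹ := by decide
  have q3 : (QuaternionGroup.a 1 : QuaternionGroup 2) ^ 2 ≠ 1 := by decide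
  set X : ↥H := e.symm (QuaternionGroup.a 1) with hX
  set Y : ↥H := e.symm (QuaternionGroup.xa 0) with hY
  have hXY2 : X ^ 2 = Y ^ 2 := by
    rw [hX, hY, ← map_pow, ← map_pow, q1]
  have hXcj : Y⁻¹ * X * Y = X⁻¹ := by
    rw [hX, hY, ← map_inv, ← map_inv, ← map_mul, ← map_mul, q2]
  have hXne : X ^ 2 ≠ 1 := by
    intro hcon
    apply q3
    have h3 := congrArg e (hcon)
    rwa [map_pow, hX, MulEquiv.apply_symm_apply, map_one] at h3
  obtain ⟨x, hxK, y, hyK, hsq, hcj, hne⟩ :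
      ∃ x ∈ K, ∃ y ∈ K, x ^ 2 = y ^ 2 ∧ y⁻¹ * x * y = x⁻¹ ∧ x ^ 2 ≠ 1 := by
    refine ⟨(X : G), hHK X.2, (Y : G), hHK Y.2, ?_, ?_, ?_⟩
    · exact_mod_cast congrArg Subtype.val hXY2
    · exact_mod_cast congrArg Subtype.val hXcj
    · intro hcon
      apply hXne
      apply Subtype.ext
      simpa using hcon
  -- abbreviations for z-conjugates
  obtain ⟨x1, hx1⟩ : ∃ w, w = z * x * z⁻¹ := ⟨_, rfl⟩
  obtain ⟨y1, hy1⟩ : ∃ w, w = z * y * z⁻¹ := ⟨_, rfl⟩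
  obtain ⟨x2, hx2d⟩ : ∃ w, w = z * x1 * z⁻¹ := ⟨_, rfl⟩
  have hx1K : x1 ∈ K := hx1 ▸ hmemf x hxK
  have hy1K : y1 ∈ K := hy1 ▸ hmemf y hyK
  have hx2K : x2 ∈ K := hx2d ▸ hmemf x1 hx1K
  -- basic commutator values
  have hcxy : comm' x y = (x ^ 2)⁻¹ := by
    have e0 : comm' x y = x⁻¹ * (y⁻¹ * x * y) := by rw [comm'_def]; group
    rw [e0, hcj]; simp only [pow_two]; group
  have hy1sq : y1 ^ 2 = z * x ^ 2 * z⁻¹ := by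
    rw [hy1]
    have e0 : (z * y * z⁻¹) ^ 2 = z * y ^ 2 * z⁻¹ := by simp only [pow_two]; group
    rw [e0, ← hsq]
  have hc11 : comm' x1 y1 = z * (x ^ 2)⁻¹ * z⁻¹ := by
    rw [hx1, hy1]
    have e0 : comm' (z * x * z⁻¹) (z * y * z⁻¹) = z * comm' x y * z⁻¹ := by
      simp only [comm'_def]; group
    rw [e0, hcxy]
  have hSxy : comm' x y1 * comm' y x1 = 1 := by
    have h := hS x hxK y hyK
    rwa [← hy1, ← hx1] at h
  have hyx1 : comm' y x1 = (comm' x y1)⁻¹ := eq_inv_of_mul_eq_one_right hSxy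
  have hSx1y := hS x1 hx1K y hyK
  rw [← hy1, ← hx2d, hc11] at hSx1y
  have hyx2 : comm' y x2 = (z * (x ^ 2)⁻¹ * z⁻¹)⁻¹ :=
    eq_inv_of_mul_eq_one_right hSx1y
  -- the triple identity for x
  have hxx := hL1 x hxK
  rw [← hx1, ← hx2d] at hxx
  have hx2e : x2 = x1⁻¹ * x⁻¹ := by
    have h := eq_inv_of_mul_eq_one_right hxx
    rw [h]; group
  -- compute comm' y x2 a second way
  have hyx2' : comm' y x2 = (comm' y x)⁻¹ * (comm' y x1)⁻¹ := by
    rw [hx2e, hbil2 y hyK x1⁻¹ (inv_mem hx1K) x⁻¹ (inv_mem hxK),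
        hcinv2 y hyK x hxK, hcinv2 y hyK x1 hx1K]
  have hyx : comm' y x = ((x ^ 2)⁻¹)⁻¹ := by rw [comm'_inv x y, hcxy]
  have E0 := hyx2.symm.trans hyx2'
  rw [hyx, hyx1] at E0
  simp only [inv_inv] at E0
  have E2 : comm' x y1 = x ^ 2 * (z * (x ^ 2)⁻¹ * z⁻¹)⁻¹ :=
    inv_mul_eq_iff_eq_mul.mp E0.symm
  have hp : comm' x y1 = x ^ 2 * (z * x ^ 2 * z⁻¹) := by rw [E2]; group
  -- the element x * y1 is an involution, hence central
  have hwK : x * y1 ∈ K := mul_mem hxK hy1K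
  have hw2 : (x * y1) ^ 2 = 1 := by
    have c1 : comm' y1 x * y1 = y1 * comm' y1 x := hccen y1 hy1K x hxK y1 hy1K
    rw [pow_two]
    calc x * y1 * (x * y1) = x * (y1 * x) * y1 := by group
      _ = x * (x * y1 * comm' y1 x) * y1 := by rw [mul_comm'_eq y1 x]
      _ = x * x * y1 * (comm' y1 x * y1) := by group
      _ = x * x * y1 * (y1 * comm' y1 x) := by rw [c1]
      _ = x ^ 2 * y1 ^ 2 * comm' y1 x := by simp only [pow_two]; group
      _ = x ^ 2 * y1 ^ 2 * (comm' x y1)⁻¹ := by rw [comm'_inv x y1]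
      _ = x ^ 2 * (z * x ^ 2 * z⁻¹) * (x ^ 2 * (z * x ^ 2 * z⁻¹))⁻¹ := by
          rw [hy1sq, hp]
      _ = 1 := by group
  have hwc := hcen1 _ hwK hw2
  have hpone : comm' x y1 = 1 := by
    have e0 : comm' x y1 = x⁻¹ * (x * y1)⁻¹ * (x * (x * y1)) := by
      rw [comm'_def]; group
    rw [← hwc x hxK] at e0
    rw [e0]; group
  -- conclude: x^2 is fixed by conjugation by z, hence trivial
  have hone : x ^ 2 * (z * x ^ 2 * z⁻¹) = 1 := by rw [← hp, hpone]
  have h4 : x ^ 2 * x ^ 2 = 1 := by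
    have h := hpow4 x hxK
    calc x ^ 2 * x ^ 2 = x ^ 4 := by rw [← pow_add]
      _ = 1 := h
  have e1 : z * x ^ 2 * z⁻¹ = (x ^ 2)⁻¹ := eq_inv_of_mul_eq_one_right hone
  have hfix : z * x ^ 2 * z⁻¹ = x ^ 2 := by
    rw [e1]; exact inv_eq_of_mul_eq_one_left h4
  have hcomz : x ^ 2 * z = z * x ^ 2 := by
    calc x ^ 2 * z = (z * x ^ 2 * z⁻¹) * z := by rw [hfix]
      _ = z * x ^ 2 := by group
  exact hne (hfpf (x ^ 2) (pow_mem hxK 2) hcomz)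
end

section
/- For an integer n ≥ 1, let U(n) be the group given by the presentation with generators a₁, …, aₙ, b₁, …, bₙ and, when n > 1, c₁, …, c_{n−1}, and relations: aᵢ⁴ = bᵢ⁴ = cⱼ² = 1 (1 ≤ i ≤ n, 1 ≤ j ≤ n−1); [aᵢ,aⱼ] = [bᵢ,bⱼ] = [aᵢ,cₖ] = [bᵢ,cₖ] = [cₖ,c_ℓ] = 1 (1 ≤ i,j ≤ n, 1 ≤ k,ℓ ≤ n−1); aᵢ² = bᵢ² and bᵢ⁻¹aᵢbᵢ = aᵢ⁻¹ (1 ≤ i ≤ n); [aᵢ,bⱼ] = c_{min(i,j)} if |i−j| = 1 and [aᵢ,bⱼ] = 1 if |i−j| ≥ 2. Then: (1) U(n) has order 2^{4n−1}; (2) U(n) is a non-abelian special 2-group, i.e. its commutator subgroup, Frattini subgroup and center coincide and form an elementary abelian 2-group; (3) Ω₁(U(n)) = Z(U(n)); (4) there exists an automorphism φ of U(n) of order 3 whose set of fixed points is exactly Z(U(n)); and (5) U(n) is indecomposable: whenever U(n) is the internal direct product of two subgroups A and B, either A or B is trivial. -/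
namespace Stmt19

open scoped commutatorElement

/-- Generators `a₁, …, aₙ`, `b₁, …, bₙ`, `c₁, …, c_{n-1}` for the group `U(n)`. -/
inductive Gen (n : ℕ) where
  | a (i : Fin n)
  | b (i : Fin n)
  | c (j : Fin (n - 1))

/-- The generator `aᵢ` as an element of the free group. -/
def genA {n : ℕ} (i : Fin n) : FreeGroup (Gen n) := FreeGroup.of (Gen.a i)

/-- The generator `bᵢ` as an element of the free group. -/
def genB {n : ℕ} (i : Fin n) : FreeGroup (Gen n) := FreeGroup.of (Gen.b i)

/-- The generator `cⱼ` as an element of the free group. -/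
def genC {n : ℕ} (j : Fin (n - 1)) : FreeGroup (Gen n) := FreeGroup.of (Gen.c j)

/-- The commutator word `[x, y] = x⁻¹y⁻¹xy`. -/
def commRel {n : ℕ} (x y : FreeGroup (Gen n)) : FreeGroup (Gen n) :=
  x⁻¹ * y⁻¹ * x * y

/-- The defining relators of `U(n)`: `aᵢ⁴ = bᵢ⁴ = cⱼ² = 1`;
`[aᵢ,aⱼ] = [bᵢ,bⱼ] = [aᵢ,cₖ] = [bᵢ,cₖ] = [cₖ,cₗ] = 1`; `aᵢ² = bᵢ²`;
`bᵢ⁻¹aᵢbᵢ = aᵢ⁻¹`; `[aᵢ,bⱼ] = c_{min(i,j)}` if `|i-j| = 1` and `[aᵢ,bⱼ] = 1` if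
`|i-j| ≥ 2`.  (Indices run over `1 ≤ i, j ≤ n` and `1 ≤ k, ℓ ≤ n-1`.) -/
def relsU (n : ℕ) : Set (FreeGroup (Gen n)) :=
  { r | (∃ i, r = genA i ^ 4) ∨ (∃ i, r = genB i ^ 4) ∨ (∃ j, r = genC j ^ 2) ∨
        (∃ i j, r = commRel (genA i) (genA j)) ∨
        (∃ i j, r = commRel (genB i) (genB j)) ∨
        (∃ i k, r = commRel (genA i) (genC k)) ∨
        (∃ i k, r = commRel (genB i) (genC k)) ∨
        (∃ k l, r = commRel (genC k) (genC l)) ∨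
        (∃ i, r = genA i ^ 2 * (genB i ^ 2)⁻¹) ∨
        (∃ i, r = (genB i)⁻¹ * genA i * genB i * genA i) ∨
        (∃ (i j : Fin n) (k : Fin (n - 1)),
          ((i : ℕ) + 1 = (j : ℕ) ∨ (j : ℕ) + 1 = (i : ℕ)) ∧
          (k : ℕ) = min (i : ℕ) (j : ℕ) ∧
          r = commRel (genA i) (genB j) * (genC k)⁻¹) ∨
        (∃ i j : Fin n, ((i : ℕ) + 2 ≤ (j : ℕ) ∨ (j : ℕ) + 2 ≤ (i : ℕ)) ∧
          r = commRel (genA i) (genB j)) }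

/-- The group `U(n)` defined by the above presentation. -/
def U (n : ℕ) := PresentedGroup (relsU n)

instance (n : ℕ) : Group (U n) := by unfold U; infer_instance


@[ext] structure MG (n : ℕ) where
  x : Fin n → ZMod 2
  y : Fin n → ZMod 2
  z : Fin n → ZMod 2
  e : Fin (n - 1) → ZMod 2
variable {n : ℕ}
def lo (j : Fin (n - 1)) : Fin n := ⟨j.1, by have := j.2; omega⟩
def hi (j : Fin (n - 1)) : Fin n := ⟨j.1 + 1, by have := j.2; omega⟩
def wz (u v : MG n) : Fin n → ZMod 2 :=
  fun i => u.x i * v.x i + u.y i * v.y i + u.y i * v.x i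
def wc (u v : MG n) : Fin (n - 1) → ZMod 2 :=
  fun j => u.x (lo j) * v.y (hi j) + u.x (hi j) * v.y (lo j)
instance : Mul (MG n) :=
  ⟨fun u v => ⟨u.x + v.x, u.y + v.y, u.z + v.z + wz u v, u.e + v.e + wc u v⟩⟩
instance : One (MG n) := ⟨⟨0, 0, 0, 0⟩⟩
instance : Inv (MG n) := ⟨fun u => ⟨u.x, u.y, u.z + wz u u, u.e + wc u u⟩⟩
@[simp] lemma mul_x (u v : MG n) : (u * v).x = u.x + v.x := rfl
@[simp] lemma mul_y (u v : MG n) : (u * v).y = u.y + v.y := rfl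
@[simp] lemma mul_z (u v : MG n) : (u * v).z = u.z + v.z + wz u v := rfl
@[simp] lemma mul_e (u v : MG n) : (u * v).e = u.e + v.e + wc u v := rfl
@[simp] lemma one_x : (1 : MG n).x = 0 := rfl
@[simp] lemma one_y : (1 : MG n).y = 0 := rfl
@[simp] lemma one_z : (1 : MG n).z = 0 := rfl
@[simp] lemma one_e : (1 : MG n).e = 0 := rfl
@[simp] lemma inv_x (u : MG n) : u⁻¹.x = u.x := rfl
@[simp] lemma inv_y (u : MG n) : u⁻¹.y = u.y := rfl
@[simp] lemma inv_z (u : MG n) : u⁻¹.z = u.z + wz u u := rfl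
@[simp] lemma inv_e (u : MG n) : u⁻¹.e = u.e + wc u u := rfl
instance : Group (MG n) where
  mul_assoc u v w := by ext i <;> simp [wz, wc] <;> ring
  one_mul u := by ext i <;> simp [wz, wc]
  mul_one u := by ext i <;> simp [wz, wc]
  inv_mul_cancel u := by
    ext i <;> simp [wz, wc] <;> ring_nf <;> simp [show (2:ZMod 2) = 0 from rfl]

-- new part
lemma zmod2_sq : ∀ a : ZMod 2, a ^ 2 = a := by decide

lemma comm_eq (g h : MG n) :
    ⁅g, h⁆ = ⟨0, 0, (fun i => g.x i * h.y i + g.y i * h.x i),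
      (fun j => g.x (lo j) * h.y (hi j) + g.x (hi j) * h.y (lo j) +
        h.x (lo j) * g.y (hi j) + h.x (hi j) * g.y (lo j))⟩ := by
  ext i <;> simp [commutatorElement_def, wz, wc] <;> ring_nf <;>
    simp [show (2:ZMod 2) = 0 from rfl, show (3:ZMod 2) = 1 from rfl,
      show (4:ZMod 2) = 0 from rfl, zmod2_sq] <;> try ring

lemma sq_eq (g : MG n) :
    g ^ 2 = ⟨0, 0, (fun i => g.x i + g.y i + g.x i * g.y i),
      (fun j => g.x (lo j) * g.y (hi j) + g.x (hi j) * g.y (lo j))⟩ := by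
  rw [pow_two]
  ext i <;> simp [wz, wc] <;> ring_nf <;>
    simp [show (2:ZMod 2) = 0 from rfl, show (3:ZMod 2) = 1 from rfl,
      show (4:ZMod 2) = 0 from rfl, zmod2_sq] <;> try ring

lemma commute_wz {g h : MG n} (hc : g * h = h * g) (i : Fin n) :
    wz g h i = wz h g i := by
  have h2 := congrFun (congrArg MG.z hc) i
  simp at h2
  linear_combination h2

lemma commute_wc {g h : MG n} (hc : g * h = h * g) (j : Fin (n - 1)) :
    wc g h j = wc h g j := by
  have h2 := congrFun (congrArg MG.e hc) j
  simp at h2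
  linear_combination h2

/-- generator a_i in the model -/
def mA (i : Fin n) : MG n := ⟨Pi.single i 1, 0, 0, 0⟩
/-- generator b_i in the model -/
def mB (i : Fin n) : MG n := ⟨0, Pi.single i 1, 0, 0⟩
/-- generator c_j in the model -/
def mC (j : Fin (n - 1)) : MG n := ⟨0, 0, 0, Pi.single j 1⟩
/-- the central element z_i -/
def mZ (i : Fin n) : MG n := ⟨0, 0, Pi.single i 1, 0⟩

lemma mem_center_iff' (g : MG n) :
    g ∈ Subgroup.center (MG n) ↔ g.x = 0 ∧ g.y = 0 := by
  rw [Subgroup.mem_center_iff]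
  constructor
  · intro hc
    constructor <;> funext i
    · have h1 := commute_wz (hc (mB i)).symm i
      simp [wz, mB, Pi.single_apply] at h1
      simpa using h1
    · have h1 := commute_wz (hc (mA i)).symm i
      simp [wz, mA, Pi.single_apply] at h1
      simpa using h1
  · rintro ⟨hx, hy⟩ h
    ext i <;> simp [wz, wc, hx, hy] <;> ring

instance : Fintype (MG n) :=
  Fintype.ofEquiv ((Fin n → ZMod 2) × (Fin n → ZMod 2) × (Fin n → ZMod 2) × (Fin (n-1) → ZMod 2))
    ⟨fun p => ⟨p.1, p.2.1, p.2.2.1, p.2.2.2⟩, fun g => (g.x, g.y, g.z, g.e),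
     fun p => rfl, fun g => rfl⟩

lemma card_MG (hn : 1 ≤ n) : Nat.card (MG n) = 2 ^ (4 * n - 1) := by
  have : Nat.card (MG n) = Nat.card
      ((Fin n → ZMod 2) × (Fin n → ZMod 2) × (Fin n → ZMod 2) × (Fin (n-1) → ZMod 2)) :=
    Nat.card_congr ⟨fun g => (g.x, g.y, g.z, g.e), fun p => ⟨p.1, p.2.1, p.2.2.1, p.2.2.2⟩,
      fun g => rfl, fun p => rfl⟩
  rw [this]
  simp [Nat.card_eq_fintype_card, Fintype.card_fun, ← pow_add]
  omega

section
variable {G : Type*} [Group G]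

lemma comm_mul_central {g0 : G} (hg0 : g0 ∈ Subgroup.center G) (m h : G) :
    ⁅m * g0, h⁆ = ⁅m, h⁆ := by
  have hc : ∀ a : G, a * g0 = g0 * a := fun a => Subgroup.mem_center_iff.mp hg0 a
  simp only [commutatorElement_def, mul_inv_rev]
  have h1 : g0 * h * (g0⁻¹ * m⁻¹) = h * m⁻¹ := by
    rw [← mul_assoc, ← hc h, mul_assoc h g0 g0⁻¹]
    simp
  calc m * g0 * h * (g0⁻¹ * m⁻¹) * h⁻¹
      = m * (g0 * h * (g0⁻¹ * m⁻¹)) * h⁻¹ := by group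
    _ = m * (h * m⁻¹) * h⁻¹ := by rw [h1]
    _ = m * h * m⁻¹ * h⁻¹ := by group

lemma comm_mul_central' {g0 : G} (hg0 : g0 ∈ Subgroup.center G) (m h : G) :
    ⁅m, h * g0⁆ = ⁅m, h⁆ := by
  rw [← commutatorElement_inv, comm_mul_central hg0, commutatorElement_inv]

lemma coatom_contains_center {K : Subgroup G} (hK : IsCoatom K)
    (h1 : Subgroup.center G ≤ commutator G)
    (hsq : ∀ g ∈ Subgroup.center G, g * g = 1) :
    Subgroup.center G ≤ K := by
  by_contra hc
  obtain ⟨g0, hg0c, hg0K⟩ := Set.not_subset.mp hc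
  set T : Subgroup G :=
    { carrier := {w | w ∈ K ∨ ∃ m ∈ K, w = m * g0}
      one_mem' := Or.inl K.one_mem
      mul_mem' := by
        rintro a b (ha | ⟨m, hm, rfl⟩) (hb | ⟨m', hm', rfl⟩)
        · exact Or.inl (K.mul_mem ha hb)
        · refine Or.inr ⟨a * m', K.mul_mem ha hm', by group⟩
        · refine Or.inr ⟨m * b, K.mul_mem hm hb, ?_⟩
          have := Subgroup.mem_center_iff.mp hg0c b
          rw [mul_assoc, ← this, mul_assoc]
        · refine Or.inl ?_
          have hcb := Subgroup.mem_center_iff.mp hg0c m'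
          have : m * g0 * (m' * g0) = m * m' * (g0 * g0) := by
            rw [mul_assoc m g0, ← mul_assoc g0 m' g0, ← hcb, mul_assoc m' g0, ← mul_assoc,
              ← mul_assoc, mul_assoc (m*m')]
          rw [this, hsq g0 hg0c, mul_one]
          exact K.mul_mem hm hm'
      inv_mem' := by
        rintro a (ha | ⟨m, hm, rfl⟩)
        · exact Or.inl (K.inv_mem ha)
        · refine Or.inr ⟨m⁻¹, K.inv_mem hm, ?_⟩
          have hg0inv : g0⁻¹ = g0 := by
            rw [inv_eq_iff_mul_eq_one, hsq g0 hg0c]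
          have := Subgroup.mem_center_iff.mp hg0c m⁻¹
          rw [mul_inv_rev, hg0inv, this] }
  have hKT : K < T := by
    constructor
    · intro k hk; exact Or.inl hk
    · intro hTK
      exact hg0K (hTK (Or.inr ⟨1, K.one_mem, (one_mul g0).symm⟩))
  have hTtop : T = ⊤ := hK.2 T hKT
  have hall : ∀ w : G, w ∈ K ∨ ∃ m ∈ K, w = m * g0 := by
    intro w
    have : w ∈ T := hTtop ▸ Subgroup.mem_top w
    exact this
  have hcommK : commutator G ≤ K := by
    rw [commutator_def, Subgroup.commutator_le]
    intro g _ h _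
    have hg := hall g
    have hh := hall h
    have key : ∀ m m' : G, m ∈ K → m' ∈ K → ⁅m, m'⁆ ∈ K := by
      intro m m' hm hm'
      simp only [commutatorElement_def]
      exact K.mul_mem (K.mul_mem (K.mul_mem hm hm') (K.inv_mem hm)) (K.inv_mem hm')
    rcases hg with hg | ⟨m, hm, rfl⟩ <;> rcases hh with hh | ⟨m', hm', rfl⟩
    · exact key _ _ hg hh
    · rw [comm_mul_central' hg0c]; exact key _ _ hg hm'
    · rw [comm_mul_central hg0c]; exact key _ _ hm hh
    · rw [comm_mul_central hg0c, comm_mul_central' hg0c]; exact key _ _ hm hm'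
  exact hg0K (hcommK (h1 hg0c))

end


-- chunk 4
variable {n : ℕ}

lemma zmod2_cases : ∀ v : ZMod 2, v = 0 ∨ v = 1 := by decide
lemma zmod2_mul_self : ∀ a : ZMod 2, a * a = a := by decide

/-- central element with given z, e parts -/
def cent (zz : Fin n → ZMod 2) (ee : Fin (n - 1) → ZMod 2) : MG n := ⟨0, 0, zz, ee⟩

lemma cent_mul (zz zz' ee ee') :
    (cent zz ee : MG n) * cent zz' ee' = cent (zz + zz') (ee + ee') := by
  ext i <;> simp [cent, wz, wc]

lemma cent_central (zz ee) : (cent zz ee : MG n) ∈ Subgroup.center (MG n) :=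
  (mem_center_iff' _).mpr ⟨rfl, rfl⟩

lemma cent_mem {H : Subgroup (MG n)} (hz : ∀ i, mZ i ∈ H) (hc : ∀ j, mC j ∈ H)
    (zz : Fin n → ZMod 2) (ee : Fin (n - 1) → ZMod 2) : cent zz ee ∈ H := by
  have key1 : ∀ s : Finset (Fin n), (cent (∑ i ∈ s, Pi.single i (zz i)) 0 : MG n) ∈ H := by
    intro s
    induction s using Finset.induction with
    | empty => rw [Finset.sum_empty]; exact H.one_mem
    | insert _ _ hx ih =>
      rename_i a s'
      rw [Finset.sum_insert hx, ← add_zero (0 : Fin (n-1) → ZMod 2), ← cent_mul]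
      refine H.mul_mem ?_ ih
      rcases zmod2_cases (zz a) with h | h <;> rw [h]
      · simp [cent]; exact H.one_mem
      · exact hz a
  have key2 : ∀ s : Finset (Fin (n-1)), (cent 0 (∑ j ∈ s, Pi.single j (ee j)) : MG n) ∈ H := by
    intro s
    induction s using Finset.induction with
    | empty => rw [Finset.sum_empty]; exact H.one_mem
    | insert _ _ hx ih =>
      rename_i a s'
      rw [Finset.sum_insert hx, ← add_zero (0 : Fin n → ZMod 2), ← cent_mul]
      refine H.mul_mem ?_ ih
      rcases zmod2_cases (ee a) with h | h <;> rw [h]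
      · simp [cent]; exact H.one_mem
      · exact hc a
  have : (cent zz ee : MG n) = cent zz 0 * cent 0 ee := by rw [cent_mul]; simp
  rw [this]
  refine H.mul_mem ?_ ?_
  · have := key1 Finset.univ
    rwa [Finset.univ_sum_single] at this
  · have := key2 Finset.univ
    rwa [Finset.univ_sum_single] at this

lemma central_eq_cent {g : MG n} (hg : g ∈ Subgroup.center (MG n)) : g = cent g.z g.e := by
  obtain ⟨hx, hy⟩ := (mem_center_iff' g).mp hg
  ext i <;> simp [cent, hx, hy]

lemma commAB (i : Fin n) : ⁅mA i, mB i⁆ = (mZ i : MG n) := by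
  ext k <;>
    simp [comm_eq, mA, mB, mZ, zmod2_mul_self, Pi.single_apply, lo, hi, Fin.ext_iff] <;>
    first
      | omega
      | (split_ifs <;> simp_all <;> omega)

lemma commABadj (j : Fin (n - 1)) : ⁅mA (lo j), mB (hi j)⁆ = (mC j : MG n) := by
  ext k <;> simp [comm_eq, mA, mB, mC, Pi.single_apply, lo, hi, Fin.ext_iff] <;>
    first
      | omega
      | (split_ifs <;> simp_all <;> omega)

lemma commutator_eq_center : commutator (MG n) = Subgroup.center (MG n) := by
  apply le_antisymm
  · rw [commutator_def, Subgroup.commutator_le]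
    intro g _ h _
    rw [mem_center_iff', comm_eq]
    exact ⟨rfl, rfl⟩
  · intro g hg
    rw [central_eq_cent hg]
    refine cent_mem (fun i => ?_) (fun j => ?_) _ _
    · rw [← commAB i]
      exact Subgroup.commutator_mem_commutator (Subgroup.mem_top _) (Subgroup.mem_top _)
    · rw [← commABadj j]
      exact Subgroup.commutator_mem_commutator (Subgroup.mem_top _) (Subgroup.mem_top _)

lemma central_sq {g : MG n} (hg : g ∈ Subgroup.center (MG n)) : g ^ 2 = 1 := by
  obtain ⟨hx, hy⟩ := (mem_center_iff' g).mp hg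
  ext i <;> simp [sq_eq, hx, hy]

lemma sq_eq_one_iff (g : MG n) : g ^ 2 = 1 ↔ g ∈ Subgroup.center (MG n) := by
  constructor
  · intro h
    rw [mem_center_iff']
    have hz := congrArg MG.z h
    rw [sq_eq] at hz
    have key : ∀ a b : ZMod 2, a + b + a * b = 0 ↔ a = 0 ∧ b = 0 := by decide
    constructor <;> funext i <;> have := congrFun hz i <;>
      simp at this <;> simp [(key _ _).mp this]
  · exact central_sq

lemma omegaOne_eq_center : omegaOne (MG n) = Subgroup.center (MG n) := by
  apply le_antisymm
  · rw [omegaOne, Subgroup.closure_le]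
    intro g hg
    have : g ^ 2 = 1 := by
      have h2 : orderOf g = 2 := hg
      rw [← h2]; exact pow_orderOf_eq_one g
    exact (sq_eq_one_iff g).mp this
  · intro g hg
    by_cases h1 : g = 1
    · rw [h1]; exact Subgroup.one_mem _
    · apply Subgroup.subset_closure
      have : orderOf g = 2 := orderOf_eq_prime ((sq_eq_one_iff g).mpr hg) h1
      exact this

lemma coatom_center_le {K : Subgroup (MG n)} (hK : IsCoatom K) :
    Subgroup.center (MG n) ≤ K := by
  refine coatom_contains_center hK (le_of_eq commutator_eq_center.symm) ?_
  intro g hg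
  have := central_sq hg
  rwa [pow_two] at this

/-- coordinate homomorphisms -/
def chiX (i : Fin n) : MG n →* Multiplicative (ZMod 2) where
  toFun g := Multiplicative.ofAdd (g.x i)
  map_one' := rfl
  map_mul' u v := rfl

def chiY (i : Fin n) : MG n →* Multiplicative (ZMod 2) where
  toFun g := Multiplicative.ofAdd (g.y i)
  map_one' := rfl
  map_mul' u v := rfl

lemma ker_coatom {f : MG n →* Multiplicative (ZMod 2)} {g : MG n} (hg : f g ≠ 1) :
    IsCoatom f.ker := by
  constructor
  · intro htop
    apply hg
    have hgk : g ∈ f.ker := by rw [htop]; exact Subgroup.mem_top g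
    rwa [MonoidHom.mem_ker] at hgk
  · intro b hb
    obtain ⟨k, hkb, hkker⟩ := SetLike.exists_of_lt hb
    rw [eq_top_iff]
    intro w _
    have hcase : ∀ m : Multiplicative (ZMod 2), m = 1 ∨ m = Multiplicative.ofAdd 1 := by decide
    by_cases hw : f w = 1
    · exact hb.le hw
    · have hfk : f k = Multiplicative.ofAdd 1 := by
        rcases hcase (f k) with h | h
        · exact absurd h hkker
        · exact h
      have hfw : f w = Multiplicative.ofAdd 1 := by
        rcases hcase (f w) with h | h
        · exact absurd h hw
        · exact h
      have : k⁻¹ * w ∈ f.ker := by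
        rw [MonoidHom.mem_ker, map_mul, map_inv, hfk, hfw]
        decide
      have := hb.le this
      have : k * (k⁻¹ * w) ∈ b := b.mul_mem hkb this
      simpa using this

lemma frattini_eq_center : frattini (MG n) = Subgroup.center (MG n) := by
  apply le_antisymm
  · intro g hg
    by_contra hgc
    rw [mem_center_iff'] at hgc
    rw [not_and_or] at hgc
    rcases hgc with h | h
    · obtain ⟨i, hi⟩ := Function.ne_iff.mp h
      have : g ∉ (chiX i).ker := by
        simp [MonoidHom.mem_ker, chiX]
        intro hc
        exact hi (by simpa using hc)
      exact this (frattini_le_coatom (ker_coatom (g := mA i) (by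
        simp [chiX, mA, Pi.single_apply])) hg)
    · obtain ⟨i, hi⟩ := Function.ne_iff.mp h
      have : g ∉ (chiY i).ker := by
        simp [MonoidHom.mem_ker, chiY]
        intro hc
        exact hi (by simpa using hc)
      exact this (frattini_le_coatom (ker_coatom (g := mB i) (by
        simp [chiY, mB, Pi.single_apply])) hg)
  · rw [frattini, Order.radical]
    exact le_iInf₂ fun K hK => coatom_center_le hK

lemma nonabelian (hn : 1 ≤ n) : ∃ x y : MG n, x * y ≠ y * x := by
  refine ⟨mB ⟨0, hn⟩, mA ⟨0, hn⟩, fun h => ?_⟩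
  have := commute_wz h ⟨0, hn⟩
  simp [wz, mA, mB, Pi.single_apply] at this

-- chunk 5 : automorphism of order 3
/-- quadratic correction term for the automorphism -/
def fc (g : MG n) : Fin (n - 1) → ZMod 2 :=
  fun j => g.x (lo j) * g.y (hi j) + g.x (hi j) * g.y (lo j) + g.y (lo j) * g.y (hi j)

def auF : MG n →* MG n where
  toFun g := ⟨g.y, g.x + g.y, g.z, g.e + fc g⟩
  map_one' : _ = _ := by ext i <;> simp [fc]
  map_mul' u v := by
    ext i <;> simp [fc, wz, wc] <;> ring_nf <;>
      simp [show (2:ZMod 2) = 0 from rfl, show (3:ZMod 2) = 1 from rfl,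
        show (4:ZMod 2) = 0 from rfl, show (5:ZMod 2) = 1 from rfl,
        show (6:ZMod 2) = 0 from rfl, zmod2_sq] <;> try ring

lemma auF3 (g : MG n) : auF (auF (auF g)) = g := by
  ext i <;> simp [auF, fc, wz, wc] <;> ring_nf <;>
    simp [show (2:ZMod 2) = 0 from rfl, show (3:ZMod 2) = 1 from rfl,
      show (4:ZMod 2) = 0 from rfl, show (5:ZMod 2) = 1 from rfl,
      show (6:ZMod 2) = 0 from rfl, show (8:ZMod 2) = 0 from rfl,
      show (12:ZMod 2) = 0 from rfl, zmod2_sq] <;> try ring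

/-- the order-3 automorphism of the model -/
def phiM : MulAut (MG n) :=
  { toFun := auF
    invFun := fun g => auF (auF g)
    left_inv := fun g => auF3 g
    right_inv := fun g => auF3 g
    map_mul' := auF.map_mul }

lemma phiM_apply (g : MG n) : phiM g = auF g := rfl

lemma phiM_cube : (phiM : MulAut (MG n)) ^ 3 = 1 := by
  apply DFunLike.ext
  intro g
  rw [pow_succ, pow_succ, pow_one, MulAut.mul_apply, MulAut.mul_apply,
    phiM_apply, phiM_apply, phiM_apply, auF3]
  rfl

lemma phiM_fixed (g : MG n) : phiM g = g ↔ g ∈ Subgroup.center (MG n) := by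
  rw [mem_center_iff']
  constructor
  · intro h
    have hx := congrArg MG.x h
    have hy := congrArg MG.y h
    simp [phiM_apply, auF] at hx hy
    exact ⟨hy, hx.trans hy⟩
  · rintro ⟨hx, hy⟩
    ext i <;> simp [phiM_apply, auF, fc, hx, hy]

lemma phiM_ne_one (hn : 1 ≤ n) : (phiM : MulAut (MG n)) ≠ 1 := by
  intro h
  have : phiM (mA ⟨0, hn⟩) = mA ⟨0, hn⟩ := by rw [h]; rfl
  have hx := congrFun (congrArg MG.x this) ⟨0, hn⟩
  simp [phiM_apply, auF, mA] at hx

instance : Fact (Nat.Prime 3) := ⟨by norm_num⟩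

lemma phiM_order (hn : 1 ≤ n) : orderOf (phiM : MulAut (MG n)) = 3 :=
  orderOf_eq_prime phiM_cube (phiM_ne_one hn)

-- chunk 6 : indecomposability
section indec
variable {A B : Subgroup (MG n)}

/-- `H` is trivial in coordinate `i` -/
def triv (H : Subgroup (MG n)) (i : Fin n) : Prop :=
  ∀ h ∈ H, h.x i = 0 ∧ h.y i = 0

lemma prod_decomp (hcomm : ∀ a ∈ A, ∀ b ∈ B, a * b = b * a) (hsup : A ⊔ B = ⊤)
    (g : MG n) : ∃ a ∈ A, ∃ b ∈ B, g = a * b := by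
  set T : Subgroup (MG n) :=
    { carrier := {w | ∃ a ∈ A, ∃ b ∈ B, w = a * b}
      one_mem' := ⟨1, A.one_mem, 1, B.one_mem, (one_mul 1).symm⟩
      mul_mem' := by
        rintro u v ⟨a, ha, b, hb, rfl⟩ ⟨a', ha', b', hb', rfl⟩
        refine ⟨a * a', A.mul_mem ha ha', b * b', B.mul_mem hb hb', ?_⟩
        have h1 : b * a' = a' * b := (hcomm a' ha' b hb).symm
        calc a * b * (a' * b') = a * (b * a') * b' := by group
          _ = a * (a' * b) * b' := by rw [h1]
          _ = a * a' * (b * b') := by group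
      inv_mem' := by
        rintro u ⟨a, ha, b, hb, rfl⟩
        refine ⟨a⁻¹, A.inv_mem ha, b⁻¹, B.inv_mem hb, ?_⟩
        rw [mul_inv_rev]
        have := hcomm a ha b hb
        calc b⁻¹ * a⁻¹ = (a * b)⁻¹ := by rw [mul_inv_rev]
          _ = (b * a)⁻¹ := by rw [this]
          _ = a⁻¹ * b⁻¹ := by rw [mul_inv_rev] }
  have hT : A ⊔ B ≤ T := by
    apply sup_le
    · intro a ha; exact ⟨a, ha, 1, B.one_mem, (mul_one a).symm⟩
    · intro b hb; exact ⟨1, A.one_mem, b, hb, (one_mul b).symm⟩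
  rw [hsup] at hT
  exact hT (Subgroup.mem_top g)

lemma dichotomy (hcomm : ∀ a ∈ A, ∀ b ∈ B, a * b = b * a) (hsup : A ⊔ B = ⊤)
    (i : Fin n) : triv A i ∨ triv B i := by
  by_contra hcon
  push_neg at hcon
  obtain ⟨hA, hB⟩ := hcon
  simp only [triv, not_forall] at hA hB
  obtain ⟨a, ha, hal⟩ := hA
  obtain ⟨b, hb, hbl⟩ := hB
  -- local values of a and b at i agree
  have key2 : ∀ p1 p2 q1 q2 : ZMod 2, ¬(p1 = 0 ∧ p2 = 0) → ¬(q1 = 0 ∧ q2 = 0) →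
      p2 * q1 = q2 * p1 → p1 = q1 ∧ p2 = q2 := by decide
  have hw : ∀ a' ∈ A, ∀ b' ∈ B, a'.y i * b'.x i = b'.y i * a'.x i := by
    intro a' ha' b' hb'
    have := commute_wz (hcomm a' ha' b' hb') i
    simp only [wz] at this
    linear_combination this
  set p1 := a.x i with hp1
  set p2 := a.y i with hp2
  have hloc : ∀ a' ∈ A, (a'.x i = 0 ∧ a'.y i = 0) ∨ (a'.x i = p1 ∧ a'.y i = p2) := by
    intro a' ha'
    by_cases h0 : a'.x i = 0 ∧ a'.y i = 0
    · exact Or.inl h0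
    · right
      have e1 := key2 _ _ _ _ h0 hbl (hw a' ha' b hb)
      have e2 := key2 _ _ _ _ hal hbl (hw a ha b hb)
      exact ⟨e1.1.trans e2.1.symm, e1.2.trans e2.2.symm⟩
  have hlocB : ∀ b' ∈ B, (b'.x i = 0 ∧ b'.y i = 0) ∨ (b'.x i = p1 ∧ b'.y i = p2) := by
    intro b' hb'
    by_cases h0 : b'.x i = 0 ∧ b'.y i = 0
    · exact Or.inl h0
    · right
      have e1 := key2 _ _ _ _ hal h0 (hw a ha b' hb')
      exact ⟨e1.1.symm, e1.2.symm⟩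
  have key3 : ∀ p1 p2 ax ay bx by' : ZMod 2,
      ((ax = 0 ∧ ay = 0) ∨ (ax = p1 ∧ ay = p2)) →
      ((bx = 0 ∧ by' = 0) ∨ (bx = p1 ∧ by' = p2)) →
      ax + bx = 1 → ay + by' = 0 → p1 = 1 ∧ p2 = 0 := by decide
  have key4 : ∀ p1 p2 ax ay bx by' : ZMod 2,
      ((ax = 0 ∧ ay = 0) ∨ (ax = p1 ∧ ay = p2)) →
      ((bx = 0 ∧ by' = 0) ∨ (bx = p1 ∧ by' = p2)) →
      ax + bx = 0 → ay + by' = 1 → p1 = 0 ∧ p2 = 1 := by decide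
  obtain ⟨aa, haa, ba, hba, hA⟩ := prod_decomp hcomm hsup (mA i)
  obtain ⟨ab, hab, bb, hbb, hB⟩ := prod_decomp hcomm hsup (mB i)
  have hxA := congrFun (congrArg MG.x hA) i
  have hyA := congrFun (congrArg MG.y hA) i
  have hxB := congrFun (congrArg MG.x hB) i
  have hyB := congrFun (congrArg MG.y hB) i
  simp [mA, mB, Pi.single_apply] at hxA hyA hxB hyB
  have r1 := key3 p1 p2 _ _ _ _ (hloc aa haa) (hlocB ba hba) hxA.symm hyA.symm
  have r2 := key4 p1 p2 _ _ _ _ (hloc ab hab) (hlocB bb hbb) hxB.symm hyB.symm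
  rw [r1.1] at r2
  exact one_ne_zero r2.1

lemma not_both_triv (hcomm : ∀ a ∈ A, ∀ b ∈ B, a * b = b * a) (hsup : A ⊔ B = ⊤)
    (i : Fin n) : ¬ (triv A i ∧ triv B i) := by
  rintro ⟨hA, hB⟩
  obtain ⟨a, ha, b, hb, hab⟩ := prod_decomp hcomm hsup (mA i)
  have hx := congrFun (congrArg MG.x hab) i
  simp [mA, Pi.single_apply, (hA a ha).1, (hB b hb).1] at hx

lemma adjacency (hcomm : ∀ a ∈ A, ∀ b ∈ B, a * b = b * a) (hsup : A ⊔ B = ⊤)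
    (j : Fin (n - 1)) : triv B (lo j) ↔ triv B (hi j) := by
  have case1 : ¬ (triv B (lo j) ∧ triv A (hi j)) := by
    rintro ⟨hBlo, hAhi⟩
    obtain ⟨a, ha, b, hb, hab⟩ := prod_decomp hcomm hsup (mA (lo j))
    obtain ⟨a', ha', b', hb', hab'⟩ := prod_decomp hcomm hsup (mB (hi j))
    have hx : (1:ZMod 2) = a.x (lo j) + b.x (lo j) := by
      have := congrFun (congrArg MG.x hab) (lo j)
      simpa [mA, Pi.single_eq_same] using this
    have hax : a.x (lo j) = 1 := by
      rw [(hBlo b hb).1, add_zero] at hx; exact hx.symm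
    have hy' : (1:ZMod 2) = a'.y (hi j) + b'.y (hi j) := by
      have := congrFun (congrArg MG.y hab') (hi j)
      simpa [mB, Pi.single_eq_same] using this
    have hb'y : b'.y (hi j) = 1 := by
      rw [(hAhi a' ha').2, zero_add] at hy'; exact hy'.symm
    have hx' : (0:ZMod 2) = a'.x (hi j) + b'.x (hi j) := by
      have := congrFun (congrArg MG.x hab') (hi j)
      simpa [mB] using this
    have hb'x : b'.x (hi j) = 0 := by
      rw [(hAhi a' ha').1, zero_add] at hx'; exact hx'.symm
    have h1 := commute_wc (hcomm a ha b' hb') j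
    simp only [wc] at h1
    rw [hax, (hAhi a ha).1, hb'y, hb'x, (hBlo b' hb').1] at h1
    simp at h1
  have case2 : ¬ (triv A (lo j) ∧ triv B (hi j)) := by
    rintro ⟨hAlo, hBhi⟩
    obtain ⟨a, ha, b, hb, hab⟩ := prod_decomp hcomm hsup (mB (lo j))
    obtain ⟨a', ha', b', hb', hab'⟩ := prod_decomp hcomm hsup (mA (hi j))
    have hy : (1:ZMod 2) = a.y (lo j) + b.y (lo j) := by
      have := congrFun (congrArg MG.y hab) (lo j)
      simpa [mB, Pi.single_eq_same] using this
    have hby : b.y (lo j) = 1 := by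
      rw [(hAlo a ha).2, zero_add] at hy; exact hy.symm
    have hbx : b.x (lo j) = 0 := by
      have hx : (0:ZMod 2) = a.x (lo j) + b.x (lo j) := by
        have := congrFun (congrArg MG.x hab) (lo j)
        simpa [mB] using this
      rw [(hAlo a ha).1, zero_add] at hx; exact hx.symm
    have ha'x : a'.x (hi j) = 1 := by
      have hx' : (1:ZMod 2) = a'.x (hi j) + b'.x (hi j) := by
        have := congrFun (congrArg MG.x hab') (hi j)
        simpa [mA, Pi.single_eq_same] using this
      rw [(hBhi b' hb').1, add_zero] at hx'; exact hx'.symm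
    have h1 := commute_wc (hcomm a' ha' b hb) j
    simp only [wc] at h1
    rw [ha'x, (hAlo a' ha').1, hby, hbx, (hBhi b hb).1] at h1
    simp at h1
  constructor
  · intro hBlo
    rcases dichotomy hcomm hsup (hi j) with h | h
    · exact absurd ⟨hBlo, h⟩ case1
    · exact h
  · intro hBhi
    rcases dichotomy hcomm hsup (lo j) with h | h
    · exact absurd ⟨h, hBhi⟩ case2
    · exact h

lemma commutator_le_A (hcomm : ∀ a ∈ A, ∀ b ∈ B, a * b = b * a) (hsup : A ⊔ B = ⊤)
    (hBcentral : B ≤ Subgroup.center (MG n)) : commutator (MG n) ≤ A := by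
  rw [commutator_def, Subgroup.commutator_le]
  intro g _ h _
  obtain ⟨a, ha, b, hb, rfl⟩ := prod_decomp hcomm hsup g
  obtain ⟨a', ha', b', hb', rfl⟩ := prod_decomp hcomm hsup h
  rw [comm_mul_central (hBcentral hb), comm_mul_central' (hBcentral hb')]
  simp only [commutatorElement_def]
  exact A.mul_mem (A.mul_mem (A.mul_mem ha ha') (A.inv_mem ha)) (A.inv_mem ha')

lemma indecomposable (hn : 1 ≤ n) (hinf : A ⊓ B = ⊥)
    (hcomm : ∀ a ∈ A, ∀ b ∈ B, a * b = b * a) (hsup : A ⊔ B = ⊤) :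
    A = ⊥ ∨ B = ⊥ := by
  -- the "side" is constant along coordinates
  have hconst : (∀ i, triv B i) ∨ (∀ i, triv A i) := by
    have step : ∀ k, ∀ hk : k < n, ∀ hk' : k + 1 < n,
        (triv B ⟨k, hk⟩ ↔ triv B ⟨k + 1, hk'⟩) := by
      intro k hk hk'
      have hj : k < n - 1 := by omega
      have := adjacency hcomm hsup ⟨k, hj⟩
      exact this
    rcases dichotomy hcomm hsup ⟨0, hn⟩ with h0 | h0
    · -- triv A at 0; show triv A everywhere
      right
      have hB0 : ¬ triv B ⟨0, hn⟩ ∨ triv B ⟨0, hn⟩ := (em _).symm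
      -- prove by induction: ∀ k hk, triv A ⟨k, hk⟩
      have key : ∀ k, ∀ hk : k < n, triv A ⟨k, hk⟩ ∧ (triv B ⟨k, hk⟩ ↔ triv B ⟨0, hn⟩) := by
        intro k
        induction k with
        | zero => intro hk; exact ⟨h0, Iff.rfl⟩
        | succ m ih =>
          intro hk
          have hm : m < n := by omega
          obtain ⟨ihA, ihB⟩ := ih hm
          have hstep := step m hm hk
          constructor
          · rcases dichotomy hcomm hsup ⟨m + 1, hk⟩ with h | h
            · exact h
            · -- triv B at m+1, so triv B at m, combined with triv A at m: contradiction? 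
              exfalso
              have hBm : triv B ⟨m, hm⟩ := hstep.mpr h
              exact not_both_triv hcomm hsup ⟨m, hm⟩ ⟨ihA, hBm⟩
          · rw [← hstep]; exact ihB
      intro i
      have := (key i.1 i.2).1
      simpa using this
    · left
      have key : ∀ k, ∀ hk : k < n, triv B ⟨k, hk⟩ := by
        intro k
        induction k with
        | zero => intro hk; exact h0
        | succ m ih =>
          intro hk
          have hm : m < n := by omega
          exact (step m hm hk).mp (ih hm)
      intro i
      have := key i.1 i.2
      simpa using this
  -- symmetric wrap-up
  have wrap : ∀ (X Y : Subgroup (MG n)), X ⊓ Y = ⊥ →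
      (∀ a ∈ X, ∀ b ∈ Y, a * b = b * a) → X ⊔ Y = ⊤ → (∀ i, triv Y i) → Y = ⊥ := by
    intro X Y hinf' hcomm' hsup' htriv
    have hYc : Y ≤ Subgroup.center (MG n) := by
      intro b hb
      rw [mem_center_iff']
      exact ⟨funext fun i => (htriv i b hb).1, funext fun i => (htriv i b hb).2⟩
    have hYA : Y ≤ X := by
      intro b hb
      have h1 : b ∈ commutator (MG n) := commutator_eq_center ▸ hYc hb
      exact commutator_le_A hcomm' hsup' hYc h1
    rw [← hinf']
    rw [le_antisymm_iff]
    constructor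
    · exact le_inf hYA le_rfl
    · exact inf_le_right
  rcases hconst with h | h
  · right
    exact wrap A B hinf hcomm hsup h
  · left
    refine wrap B A ?_ ?_ ?_ h
    · rw [inf_comm]; exact hinf
    · intro b hb a ha; exact (hcomm a ha b hb).symm
    · rw [sup_comm]; exact hsup

end indec
-- chunk 7 : relations hold in the model
lemma centZ (i : Fin n) : (mZ i : MG n) ∈ Subgroup.center (MG n) :=
  (mem_center_iff' _).mpr ⟨rfl, rfl⟩

lemma centC (j : Fin (n - 1)) : (mC j : MG n) ∈ Subgroup.center (MG n) :=
  (mem_center_iff' _).mpr ⟨rfl, rfl⟩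

lemma sqA (i : Fin n) : (mA i : MG n) ^ 2 = mZ i := by
  ext k <;> simp [sq_eq, mA, mZ]

lemma sqB (i : Fin n) : (mB i : MG n) ^ 2 = mZ i := by
  ext k <;> simp [sq_eq, mB, mZ]

lemma sqZ (i : Fin n) : (mZ i : MG n) ^ 2 = 1 := central_sq (centZ i)
lemma sqC (j : Fin (n - 1)) : (mC j : MG n) ^ 2 = 1 := central_sq (centC j)

lemma fourA (i : Fin n) : (mA i : MG n) ^ 4 = 1 := by
  have : (4 : ℕ) = 2 * 2 := rfl
  rw [this, pow_mul, sqA, sqZ]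

lemma fourB (i : Fin n) : (mB i : MG n) ^ 4 = 1 := by
  have : (4 : ℕ) = 2 * 2 := rfl
  rw [this, pow_mul, sqB, sqZ]

/-- `x⁻¹y⁻¹xy` when `⁅x,y⁆` is central -/
lemma comm_inv_inv {G : Type*} [Group G] {a b c : G} (h : ⁅a, b⁆ = c)
    (hc : c ∈ Subgroup.center G) : a⁻¹ * b⁻¹ * a * b = c := by
  have h1 : a * b = c * (b * a) := by rw [← h]; group
  have h2 := Subgroup.mem_center_iff.mp hc (b * a)
  calc a⁻¹ * b⁻¹ * a * b = (b * a)⁻¹ * (a * b) := by group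
    _ = (b * a)⁻¹ * (c * (b * a)) := by rw [h1]
    _ = (b * a)⁻¹ * ((b * a) * c) := by rw [h2]
    _ = c := by group

lemma commAA (i j : Fin n) : ⁅(mA i : MG n), mA j⁆ = 1 := by
  ext k <;> simp [comm_eq, mA]
lemma commBB (i j : Fin n) : ⁅(mB i : MG n), mB j⁆ = 1 := by
  ext k <;> simp [comm_eq, mB]
lemma commAC (i : Fin n) (k : Fin (n - 1)) : ⁅(mA i : MG n), mC k⁆ = 1 := by
  ext t <;> simp [comm_eq, mA, mC]
lemma commBC (i : Fin n) (k : Fin (n - 1)) : ⁅(mB i : MG n), mC k⁆ = 1 := by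
  ext t <;> simp [comm_eq, mB, mC]
lemma commCC (k l : Fin (n - 1)) : ⁅(mC k : MG n), mC l⁆ = 1 := by
  ext t <;> simp [comm_eq, mC]

lemma commABadj' (i j : Fin n) (k : Fin (n - 1))
    (hadj : (i : ℕ) + 1 = (j : ℕ) ∨ (j : ℕ) + 1 = (i : ℕ)) (hk : (k : ℕ) = min (i : ℕ) (j : ℕ)) :
    ⁅(mA i : MG n), mB j⁆ = mC k := by
  ext t <;> simp [comm_eq, mA, mB, mC, Pi.single_apply, lo, hi, Fin.ext_iff] <;>
    first
      | omega
      | (split_ifs <;> simp_all <;> omega)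

lemma commABfar (i j : Fin n) (hfar : (i : ℕ) + 2 ≤ (j : ℕ) ∨ (j : ℕ) + 2 ≤ (i : ℕ)) :
    ⁅(mA i : MG n), mB j⁆ = 1 := by
  ext t <;> simp [comm_eq, mA, mB, Pi.single_apply, lo, hi, Fin.ext_iff] <;>
    first
      | omega
      | (split_ifs <;> simp_all <;> omega)

lemma relBA (i : Fin n) : (mB i)⁻¹ * mA i * mB i * mA i = (1 : MG n) := by
  have h1 : mA i * mB i = mZ i * (mB i * mA i) := by rw [← commAB i]; group
  have hz := Subgroup.mem_center_iff.mp (centZ i) (mB i)⁻¹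
  calc (mB i)⁻¹ * mA i * mB i * mA i = (mB i)⁻¹ * (mA i * mB i) * mA i := by group
    _ = (mB i)⁻¹ * (mZ i * (mB i * mA i)) * mA i := by rw [h1]
    _ = ((mB i)⁻¹ * mZ i) * (mB i * mA i) * mA i := by group
    _ = (mZ i * (mB i)⁻¹) * (mB i * mA i) * mA i := by rw [hz]
    _ = mZ i * (mA i * mA i) := by group
    _ = mZ i * mA i ^ 2 := by rw [pow_two]
    _ = mZ i * mZ i := by rw [sqA]
    _ = mZ i ^ 2 := by rw [pow_two]
    _ = 1 := sqZ i

/-- images of the generators in the model -/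
def fGen : Gen n → MG n
  | .a i => mA i
  | .b i => mB i
  | .c j => mC j

lemma lift_commRel (x y : FreeGroup (Gen n)) :
    FreeGroup.lift fGen (commRel x y) =
      (FreeGroup.lift fGen x)⁻¹ * (FreeGroup.lift fGen y)⁻¹ *
      FreeGroup.lift fGen x * FreeGroup.lift fGen y := by
  simp [commRel]

lemma relations_hold : ∀ r ∈ relsU n, FreeGroup.lift fGen r = 1 := by
  intro r hr
  rcases hr with ⟨i, rfl⟩ | ⟨i, rfl⟩ | ⟨j, rfl⟩ | ⟨i, j, rfl⟩ | ⟨i, j, rfl⟩ | ⟨i, k, rfl⟩ |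
    ⟨i, k, rfl⟩ | ⟨k, l, rfl⟩ | ⟨i, rfl⟩ | ⟨i, rfl⟩ | ⟨i, j, k, hadj, hk, rfl⟩ | ⟨i, j, hfar, rfl⟩
  · simp [genA, fGen, fourA]
  · simp [genB, fGen, fourB]
  · simp [genC, fGen, sqC]
  · rw [lift_commRel]; simp [genA, fGen]
    exact comm_inv_inv (commAA i j) (Subgroup.one_mem _)
  · rw [lift_commRel]; simp [genB, fGen]
    exact comm_inv_inv (commBB i j) (Subgroup.one_mem _)
  · rw [lift_commRel]; simp [genA, genC, fGen]
    exact comm_inv_inv (commAC i k) (Subgroup.one_mem _)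
  · rw [lift_commRel]; simp [genB, genC, fGen]
    exact comm_inv_inv (commBC i k) (Subgroup.one_mem _)
  · rw [lift_commRel]; simp [genC, fGen]
    exact comm_inv_inv (commCC k l) (Subgroup.one_mem _)
  · simp [genA, genB, fGen, sqA, sqB]
  · simp [genA, genB, fGen]
    exact relBA i
  · rw [map_mul, lift_commRel]; simp [genA, genB, genC, fGen]
    rw [comm_inv_inv (commABadj' i j k hadj hk) (centC k)]
    simp
  · rw [lift_commRel]; simp [genA, genB, fGen]
    exact comm_inv_inv (commABfar i j hfar) (Subgroup.one_mem _)

-- chunk 8 : the model is generated by the generators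
lemma pureX_mul (p q : Fin n → ZMod 2) :
    (⟨p, 0, 0, 0⟩ : MG n) * ⟨q, 0, 0, 0⟩ * cent (fun i => p i * q i) 0 = ⟨p + q, 0, 0, 0⟩ := by
  ext k <;> simp [cent, wz, wc] <;> ring_nf <;>
    simp [show (2:ZMod 2) = 0 from rfl, zmod2_sq] <;> try ring

lemma pureY_mul (p q : Fin n → ZMod 2) :
    (⟨0, p, 0, 0⟩ : MG n) * ⟨0, q, 0, 0⟩ * cent (fun i => p i * q i) 0 = ⟨0, p + q, 0, 0⟩ := by
  ext k <;> simp [cent, wz, wc] <;> ring_nf <;>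
    simp [show (2:ZMod 2) = 0 from rfl, zmod2_sq] <;> try ring

lemma assemble (g : MG n) :
    g = (⟨g.x, 0, 0, 0⟩ : MG n) * ⟨0, g.y, 0, 0⟩ *
      cent g.z (g.e + fun j => g.x (lo j) * g.y (hi j) + g.x (hi j) * g.y (lo j)) := by
  ext k <;> simp [cent, wz, wc] <;> ring_nf <;>
    simp [show (2:ZMod 2) = 0 from rfl, zmod2_sq] <;> try ring

lemma gen_MG : Subgroup.closure (Set.range (fGen : Gen n → MG n)) = ⊤ := by
  set H := Subgroup.closure (Set.range (fGen : Gen n → MG n)) with hH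
  have hA : ∀ i, mA i ∈ H := fun i => Subgroup.subset_closure ⟨.a i, rfl⟩
  have hB : ∀ i, mB i ∈ H := fun i => Subgroup.subset_closure ⟨.b i, rfl⟩
  have hC : ∀ j, mC j ∈ H := fun j => Subgroup.subset_closure ⟨.c j, rfl⟩
  have hZ : ∀ i, mZ i ∈ H := fun i => by
    have := H.pow_mem (hA i) 2
    rwa [sqA] at this
  have hcent : ∀ zz ee, (cent zz ee : MG n) ∈ H := fun zz ee => cent_mem hZ hC zz ee
  have hsingleX : ∀ (i : Fin n) (v : ZMod 2), (⟨Pi.single i v, 0, 0, 0⟩ : MG n) ∈ H := by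
    intro i v
    rcases zmod2_cases v with h | h <;> subst h
    · have : (⟨Pi.single i 0, 0, 0, 0⟩ : MG n) = 1 := by ext k <;> simp
      rw [this]; exact H.one_mem
    · exact hA i
  have hsingleY : ∀ (i : Fin n) (v : ZMod 2), (⟨0, Pi.single i v, 0, 0⟩ : MG n) ∈ H := by
    intro i v
    rcases zmod2_cases v with h | h <;> subst h
    · have : (⟨0, Pi.single i 0, 0, 0⟩ : MG n) = 1 := by ext k <;> simp
      rw [this]; exact H.one_mem
    · exact hB i
  have hpureX : ∀ p : Fin n → ZMod 2, (⟨p, 0, 0, 0⟩ : MG n) ∈ H := by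
    intro p
    have key : ∀ s : Finset (Fin n), (⟨∑ i ∈ s, Pi.single i (p i), 0, 0, 0⟩ : MG n) ∈ H := by
      intro s
      induction s using Finset.induction with
      | empty =>
        have : (⟨(0 : Fin n → ZMod 2), 0, 0, 0⟩ : MG n) = 1 := by ext k <;> simp
        simpa [this] using H.one_mem
      | insert _ _ hx ih =>
        rename_i a s'
        rw [Finset.sum_insert hx, ← pureX_mul]
        exact H.mul_mem (H.mul_mem (hsingleX a (p a)) ih) (hcent _ _)
    have := key Finset.univ
    rwa [Finset.univ_sum_single] at this
  have hpureY : ∀ p : Fin n → ZMod 2, (⟨0, p, 0, 0⟩ : MG n) ∈ H := by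
    intro p
    have key : ∀ s : Finset (Fin n), (⟨0, ∑ i ∈ s, Pi.single i (p i), 0, 0⟩ : MG n) ∈ H := by
      intro s
      induction s using Finset.induction with
      | empty =>
        have : (⟨0, (0 : Fin n → ZMod 2), 0, 0⟩ : MG n) = 1 := by ext k <;> simp
        simpa [this] using H.one_mem
      | insert _ _ hx ih =>
        rename_i a s'
        rw [Finset.sum_insert hx, ← pureY_mul]
        exact H.mul_mem (H.mul_mem (hsingleY a (p a)) ih) (hcent _ _)
    have := key Finset.univ
    rwa [Finset.univ_sum_single] at this
  rw [eq_top_iff]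
  intro g _
  rw [assemble g]
  exact H.mul_mem (H.mul_mem (hpureX g.x) (hpureY g.y)) (hcent _ _)

-- chunk 9 : generic counting lemma for closures of commuting involutions
section counting
variable {G : Type*} [Group G]

lemma zmod2_val_add : ∀ u v : ZMod 2, (u + v).val = u.val + v.val ∨
    (u + v).val + 2 = u.val + v.val := by decide

/-- homomorphism sending `m` to `g ^ m.val` for an element of order dividing 2 -/
def powHom (g : G) (h2 : g ^ 2 = 1) : Multiplicative (ZMod 2) →* G where
  toFun m := g ^ (Multiplicative.toAdd m).val
  map_one' := by simp [show ((Multiplicative.toAdd 1 : ZMod 2)).val = 0 from rfl]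
  map_mul' u v := by
    simp only [toAdd_mul]
    rcases zmod2_val_add (Multiplicative.toAdd u) (Multiplicative.toAdd v) with h | h
    · rw [h, pow_add]
    · rw [← pow_add, ← h, pow_add, h2, mul_one]

lemma card_closure_range_le {ι : Type*} [Fintype ι] [DecidableEq ι]
    (g : ι → G) (h2 : ∀ i, g i ^ 2 = 1) (hc : ∀ i j, Commute (g i) (g j)) :
    Finite (Subgroup.closure (Set.range g)) ∧
      Nat.card (Subgroup.closure (Set.range g)) ≤ 2 ^ (Fintype.card ι) := by
  have hcomm : Pairwise fun i j => ∀ (x y : Multiplicative (ZMod 2)),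
      Commute (powHom (g i) (h2 i) x) (powHom (g j) (h2 j) y) := by
    intro i j _ x y
    exact (hc i j).pow_pow _ _
  set F := MonoidHom.noncommPiCoprod (fun i => powHom (g i) (h2 i)) hcomm with hF
  have hrange : Subgroup.closure (Set.range g) = F.range := by
    apply le_antisymm
    · rw [Subgroup.closure_le]
      rintro x ⟨i, rfl⟩
      rw [SetLike.mem_coe, MonoidHom.mem_range]
      refine ⟨Pi.mulSingle i (Multiplicative.ofAdd 1), ?_⟩
      rw [hF, MonoidHom.noncommPiCoprod_mulSingle]
      show g i ^ ((1 : ZMod 2)).val = g i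
      rw [show ((1 : ZMod 2)).val = 1 from rfl, pow_one]
    · rw [hF, MonoidHom.noncommPiCoprod_range]
      refine iSup_le fun i => ?_
      intro x hx
      rw [MonoidHom.mem_range] at hx
      obtain ⟨m, rfl⟩ := hx
      exact Subgroup.pow_mem _ (Subgroup.subset_closure (Set.mem_range_self i)) _
  rw [hrange]
  constructor
  · have : Function.Surjective F.rangeRestrict := F.rangeRestrict_surjective
    exact Finite.of_surjective _ this
  · have h1 : Nat.card F.range ≤ Nat.card (∀ _ : ι, Multiplicative (ZMod 2)) :=
      Nat.card_le_card_of_surjective _ F.rangeRestrict_surjective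
    calc Nat.card F.range ≤ Nat.card (∀ _ : ι, Multiplicative (ZMod 2)) := h1
      _ = 2 ^ Fintype.card ι := by
          rw [Nat.card_eq_fintype_card]
          simp [Fintype.card_fun]

end counting
-- chunk 10 : cardinality bound for the presented group
section bound
variable (n)

def mkU : FreeGroup (Gen n) →* U n := QuotientGroup.mk' (Subgroup.normalClosure (relsU n))

variable {n}

lemma rel_one {r : FreeGroup (Gen n)} (hr : r ∈ relsU n) : mkU n r = 1 := by
  have h1 : r ∈ Subgroup.normalClosure (relsU n) := Subgroup.subset_normalClosure hr
  rwa [← QuotientGroup.ker_mk' (Subgroup.normalClosure (relsU n)), MonoidHom.mem_ker] at h1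

def ua (i : Fin n) : U n := mkU n (genA i)
def ub (i : Fin n) : U n := mkU n (genB i)
def uc (j : Fin (n - 1)) : U n := mkU n (genC j)

lemma comm_of_rel_one {G : Type*} [Group G] {a b : G} (h : a⁻¹ * b⁻¹ * a * b = 1) :
    a * b = b * a := by
  calc a * b = (b * a) * (a⁻¹ * b⁻¹ * a * b) := by group
    _ = b * a := by rw [h, mul_one]

lemma mk_commRel (x y : FreeGroup (Gen n)) :
    mkU n (commRel x y) = (mkU n x)⁻¹ * (mkU n y)⁻¹ * mkU n x * mkU n y := by
  simp [commRel]

lemma rA4 (i : Fin n) : ua i ^ 4 = 1 := by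
  have := rel_one (n := n) (Or.inl ⟨i, rfl⟩)
  rwa [map_pow] at this

lemma rB4 (i : Fin n) : ub i ^ 4 = 1 := by
  have := rel_one (n := n) (Or.inr (Or.inl ⟨i, rfl⟩))
  rwa [map_pow] at this

lemma rC2 (j : Fin (n - 1)) : uc j ^ 2 = 1 := by
  have := rel_one (n := n) (Or.inr (Or.inr (Or.inl ⟨j, rfl⟩)))
  rwa [map_pow] at this

lemma cAA (i j : Fin n) : ua i * ua j = ua j * ua i := by
  have := rel_one (n := n) (Or.inr (Or.inr (Or.inr (Or.inl ⟨i, j, rfl⟩))))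
  rw [mk_commRel] at this
  exact comm_of_rel_one this

lemma cBB (i j : Fin n) : ub i * ub j = ub j * ub i := by
  have := rel_one (n := n) (Or.inr (Or.inr (Or.inr (Or.inr (Or.inl ⟨i, j, rfl⟩)))))
  rw [mk_commRel] at this
  exact comm_of_rel_one this

lemma cAC (i : Fin n) (k : Fin (n - 1)) : ua i * uc k = uc k * ua i := by
  have := rel_one (n := n) (Or.inr (Or.inr (Or.inr (Or.inr (Or.inr (Or.inl ⟨i, k, rfl⟩))))))
  rw [mk_commRel] at this
  exact comm_of_rel_one this

lemma cBC (i : Fin n) (k : Fin (n - 1)) : ub i * uc k = uc k * ub i := by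
  have := rel_one (n := n)
    (Or.inr (Or.inr (Or.inr (Or.inr (Or.inr (Or.inr (Or.inl ⟨i, k, rfl⟩)))))))
  rw [mk_commRel] at this
  exact comm_of_rel_one this

lemma cCC (k l : Fin (n - 1)) : uc k * uc l = uc l * uc k := by
  have := rel_one (n := n)
    (Or.inr (Or.inr (Or.inr (Or.inr (Or.inr (Or.inr (Or.inr (Or.inl ⟨k, l, rfl⟩))))))))
  rw [mk_commRel] at this
  exact comm_of_rel_one this

lemma rAB2 (i : Fin n) : ua i ^ 2 = ub i ^ 2 := by
  have := rel_one (n := n)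
    (Or.inr (Or.inr (Or.inr (Or.inr (Or.inr (Or.inr (Or.inr (Or.inr (Or.inl ⟨i, rfl⟩)))))))))
  rw [map_mul, map_inv, map_pow, map_pow] at this
  exact mul_inv_eq_one.mp this

lemma rBA (i : Fin n) : (ub i)⁻¹ * ua i * ub i * ua i = 1 := by
  have := rel_one (n := n)
    (Or.inr (Or.inr (Or.inr (Or.inr (Or.inr (Or.inr (Or.inr (Or.inr (Or.inr (Or.inl
      ⟨i, rfl⟩))))))))))
  simpa [ua, ub] using this

lemma rAdj (i j : Fin n) (k : Fin (n - 1))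
    (hadj : (i : ℕ) + 1 = (j : ℕ) ∨ (j : ℕ) + 1 = (i : ℕ)) (hk : (k : ℕ) = min (i : ℕ) (j : ℕ)) :
    (ua i)⁻¹ * (ub j)⁻¹ * ua i * ub j = uc k := by
  have := rel_one (n := n)
    (Or.inr (Or.inr (Or.inr (Or.inr (Or.inr (Or.inr (Or.inr (Or.inr (Or.inr (Or.inr (Or.inl
      ⟨i, j, k, hadj, hk, rfl⟩)))))))))))
  rw [map_mul, mk_commRel, map_inv] at this
  exact mul_inv_eq_one.mp this

lemma rFar (i j : Fin n) (hfar : (i : ℕ) + 2 ≤ (j : ℕ) ∨ (j : ℕ) + 2 ≤ (i : ℕ)) :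
    ua i * ub j = ub j * ua i := by
  have := rel_one (n := n)
    (Or.inr (Or.inr (Or.inr (Or.inr (Or.inr (Or.inr (Or.inr (Or.inr (Or.inr (Or.inr (Or.inr
      ⟨i, j, hfar, rfl⟩)))))))))))
  rw [mk_commRel] at this
  exact comm_of_rel_one this

lemma central_of_commutes_gens {G : Type*} [Group G] {S : Set G}
    (hS : Subgroup.closure S = ⊤) {g : G} (h : ∀ s ∈ S, s * g = g * s) :
    g ∈ Subgroup.center G := by
  rw [Subgroup.mem_center_iff]
  intro x
  have hle : Subgroup.closure S ≤ Subgroup.centralizer {g} := by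
    rw [Subgroup.closure_le]
    intro s hs
    rw [SetLike.mem_coe, Subgroup.mem_centralizer_iff]
    intro m hm
    rw [Set.mem_singleton_iff] at hm
    subst hm
    exact (h s hs).symm
  have hx : x ∈ Subgroup.centralizer {g} := hle (hS ▸ Subgroup.mem_top x)
  exact (Subgroup.mem_centralizer_iff.mp hx g rfl).symm

lemma of_eq_ua (i : Fin n) : (PresentedGroup.of (Gen.a i) : U n) = ua i := rfl
lemma of_eq_ub (i : Fin n) : (PresentedGroup.of (Gen.b i) : U n) = ub i := rfl
lemma of_eq_uc (j : Fin (n - 1)) : (PresentedGroup.of (Gen.c j) : U n) = uc j := rfl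

lemma gen_U : Subgroup.closure (Set.range (PresentedGroup.of : Gen n → U n)) = ⊤ :=
  PresentedGroup.closure_range_of (relsU n)

lemma uc_central (k : Fin (n - 1)) : (uc k : U n) ∈ Subgroup.center (U n) := by
  apply central_of_commutes_gens gen_U
  rintro s ⟨gen, rfl⟩
  cases gen with
  | a i => rw [of_eq_ua]; exact cAC i k
  | b i => rw [of_eq_ub]; exact cBC i k
  | c l => rw [of_eq_uc]; exact cCC l k

lemma sq_comm_of_inv_conj {G : Type*} [Group G] {a b : G}
    (h : b⁻¹ * a * b * a = 1) (h4 : a ^ 4 = 1) : a ^ 2 * b = b * a ^ 2 := by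
  have hconj : b⁻¹ * a * b = a⁻¹ := by
    calc b⁻¹ * a * b = b⁻¹ * a * b * a * a⁻¹ := by group
      _ = 1 * a⁻¹ := by rw [h]
      _ = a⁻¹ := one_mul _
  have hsq : b⁻¹ * a ^ 2 * b = a⁻¹ * a⁻¹ := by
    calc b⁻¹ * a ^ 2 * b = (b⁻¹ * a * b) * (b⁻¹ * a * b) := by rw [pow_two]; group
      _ = a⁻¹ * a⁻¹ := by rw [hconj]
  have h4' : a⁻¹ * a⁻¹ = a ^ 2 := by
    have h22 : a ^ 2 * a ^ 2 = 1 := by rw [← pow_add]; exact h4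
    have := inv_eq_of_mul_eq_one_right h22
    calc a⁻¹ * a⁻¹ = (a ^ 2)⁻¹ := by rw [pow_two, mul_inv_rev]
      _ = a ^ 2 := this
  calc a ^ 2 * b = b * (b⁻¹ * a ^ 2 * b) := by group
    _ = b * (a⁻¹ * a⁻¹) := by rw [hsq]
    _ = b * a ^ 2 := by rw [h4']

lemma sq_comm_of_comm_central {G : Type*} [Group G] {a b c : G}
    (h : a⁻¹ * b⁻¹ * a * b = c) (hc : c ∈ Subgroup.center G) (hc2 : c ^ 2 = 1) :
    a ^ 2 * b = b * a ^ 2 := by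
  have hconj : b⁻¹ * a * b = a * c := by
    calc b⁻¹ * a * b = a * (a⁻¹ * b⁻¹ * a * b) := by group
      _ = a * c := by rw [h]
  have hsq : b⁻¹ * a ^ 2 * b = a ^ 2 * c ^ 2 := by
    calc b⁻¹ * a ^ 2 * b = (b⁻¹ * a * b) * (b⁻¹ * a * b) := by rw [pow_two]; group
      _ = (a * c) * (a * c) := by rw [hconj]
      _ = a * (c * a) * c := by group
      _ = a * (a * c) * c := by rw [← Subgroup.mem_center_iff.mp hc a]
      _ = a ^ 2 * c ^ 2 := by rw [pow_two, pow_two]; group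
  calc a ^ 2 * b = b * (b⁻¹ * a ^ 2 * b) := by group
    _ = b * (a ^ 2 * c ^ 2) := by rw [hsq]
    _ = b * a ^ 2 := by rw [hc2, mul_one]

lemma ua_sq_central (i : Fin n) : (ua i ^ 2 : U n) ∈ Subgroup.center (U n) := by
  apply central_of_commutes_gens gen_U
  rintro s ⟨gen, rfl⟩
  cases gen with
  | a j =>
    rw [of_eq_ua]
    exact ((show Commute (ua j) (ua i) from cAA j i).pow_right 2).eq
  | b j =>
    rw [of_eq_ub]
    have hi := i.2
    have hj := j.2
    rcases (show (i : ℕ) = (j : ℕ) ∨ ((i : ℕ) + 1 = (j : ℕ) ∨ (j : ℕ) + 1 = (i : ℕ)) ∨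
        ((i : ℕ) + 2 ≤ (j : ℕ) ∨ (j : ℕ) + 2 ≤ (i : ℕ)) by omega) with hij | hadj | hfar
    · have hije : i = j := Fin.val_injective hij
      subst hije
      exact (sq_comm_of_inv_conj (rBA i) (rA4 i)).symm
    · have hkbound : min (i : ℕ) (j : ℕ) < n - 1 := by omega
      have := sq_comm_of_comm_central (rAdj i j ⟨min (i : ℕ) (j : ℕ), hkbound⟩ hadj rfl)
        (uc_central _) (rC2 _)
      exact this.symm
    · exact ((show Commute (ub j) (ua i) from (rFar i j hfar).symm).pow_right 2).eq
  | c l =>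
    rw [of_eq_uc]
    exact ((show Commute (uc l) (ua i) from (cAC i l).symm).pow_right 2).eq

-- chunk 11 : the subgroup Z0 and the quotient
variable (n)

def zgen : (Fin n ⊕ Fin (n - 1)) → U n := Sum.elim (fun i => ua i ^ 2) uc

def Z0 : Subgroup (U n) := Subgroup.closure (Set.range (zgen n))

variable {n}

lemma zgen_central (s) : zgen n s ∈ Subgroup.center (U n) := by
  cases s with
  | inl i => exact ua_sq_central i
  | inr j => exact uc_central j

lemma Z0_le_center : Z0 n ≤ Subgroup.center (U n) := by
  rw [Z0, Subgroup.closure_le]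
  rintro x ⟨s, rfl⟩
  exact zgen_central s

instance Z0_normal : (Z0 n).Normal := by
  constructor
  intro z hz g
  have h := Subgroup.mem_center_iff.mp (Z0_le_center hz) g
  have : g * z * g⁻¹ = z := by
    rw [h]
    group
  rw [this]
  exact hz

lemma zgen_sq (s) : zgen n s ^ 2 = 1 := by
  cases s with
  | inl i =>
    show (ua i ^ 2) ^ 2 = 1
    rw [← pow_mul]
    exact rA4 i
  | inr j => exact rC2 j

lemma zgen_comm (s t) : Commute (zgen n s) (zgen n t) :=
  Subgroup.mem_center_iff.mp (zgen_central t) _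

lemma finite_Z0 : Finite (Z0 n) :=
  (card_closure_range_le (zgen n) zgen_sq zgen_comm).1

lemma card_Z0_le : Nat.card (Z0 n) ≤ 2 ^ (n + (n - 1)) := by
  have h := (card_closure_range_le (zgen n) zgen_sq zgen_comm).2
  simpa [Z0] using h

lemma mk'_eq_one_of_mem {G : Type*} [Group G] {N : Subgroup G} [N.Normal] {x : G}
    (h : x ∈ N) : QuotientGroup.mk' N x = 1 := by
  rw [← QuotientGroup.ker_mk' N] at h
  exact MonoidHom.mem_ker.mp h

lemma comm_in_quotient {G : Type*} [Group G] {N : Subgroup G} [N.Normal] {x y : G}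
    (h : x⁻¹ * y⁻¹ * x * y ∈ N) :
    QuotientGroup.mk' N x * QuotientGroup.mk' N y =
      QuotientGroup.mk' N y * QuotientGroup.mk' N x := by
  apply comm_of_rel_one
  rw [← map_inv, ← map_inv, ← map_mul, ← map_mul, ← map_mul]
  exact mk'_eq_one_of_mem h

lemma ua_sq_mem_Z0 (i : Fin n) : ua i ^ 2 ∈ Z0 n :=
  Subgroup.subset_closure ⟨Sum.inl i, rfl⟩

lemma uc_mem_Z0 (j : Fin (n - 1)) : uc j ∈ Z0 n :=
  Subgroup.subset_closure ⟨Sum.inr j, rfl⟩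

variable (n)

def qgen : Fin n ⊕ Fin n → U n ⧸ Z0 n :=
  Sum.elim (fun i => QuotientGroup.mk' (Z0 n) (ua i)) (fun i => QuotientGroup.mk' (Z0 n) (ub i))

variable {n}

lemma qgen_sq (s) : qgen n s ^ 2 = 1 := by
  cases s with
  | inl i =>
    show (QuotientGroup.mk' (Z0 n) (ua i)) ^ 2 = 1
    rw [← map_pow]
    exact mk'_eq_one_of_mem (ua_sq_mem_Z0 i)
  | inr i =>
    show (QuotientGroup.mk' (Z0 n) (ub i)) ^ 2 = 1
    rw [← map_pow, ← rAB2]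
    exact mk'_eq_one_of_mem (ua_sq_mem_Z0 i)

lemma commAB_mem_Z0 (i j : Fin n) : (ua i)⁻¹ * (ub j)⁻¹ * ua i * ub j ∈ Z0 n := by
  have hi := i.2
  have hj := j.2
  rcases (show (i : ℕ) = (j : ℕ) ∨ ((i : ℕ) + 1 = (j : ℕ) ∨ (j : ℕ) + 1 = (i : ℕ)) ∨
      ((i : ℕ) + 2 ≤ (j : ℕ) ∨ (j : ℕ) + 2 ≤ (i : ℕ)) by omega) with hij | hadj | hfar
  · have hije : i = j := Fin.val_injective hij
    subst hije
    have hconj : (ub i)⁻¹ * ua i * ub i = (ua i)⁻¹ := by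
      calc (ub i)⁻¹ * ua i * ub i = (ub i)⁻¹ * ua i * ub i * ua i * (ua i)⁻¹ := by group
        _ = 1 * (ua i)⁻¹ := by rw [rBA i]
        _ = (ua i)⁻¹ := one_mul _
    have hval : (ua i)⁻¹ * (ub i)⁻¹ * ua i * ub i = (ua i ^ 2)⁻¹ := by
      calc (ua i)⁻¹ * (ub i)⁻¹ * ua i * ub i = (ua i)⁻¹ * ((ub i)⁻¹ * ua i * ub i) := by group
        _ = (ua i)⁻¹ * (ua i)⁻¹ := by rw [hconj]
        _ = (ua i ^ 2)⁻¹ := by rw [pow_two, mul_inv_rev]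
    rw [hval]
    exact (Z0 n).inv_mem (ua_sq_mem_Z0 i)
  · have hkbound : min (i : ℕ) (j : ℕ) < n - 1 := by omega
    rw [rAdj i j ⟨min (i : ℕ) (j : ℕ), hkbound⟩ hadj rfl]
    exact uc_mem_Z0 _
  · have hval : (ua i)⁻¹ * (ub j)⁻¹ * ua i * ub j = 1 := by
      have h1 : (ua i)⁻¹ * (ub j)⁻¹ * ua i * ub j = (ua i)⁻¹ * (ub j)⁻¹ * (ua i * ub j) := by
        group
      rw [h1, rFar i j hfar]
      group
    rw [hval]
    exact (Z0 n).one_mem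

lemma qgen_comm (s t) : Commute (qgen n s) (qgen n t) := by
  cases s with
  | inl i =>
    cases t with
    | inl j =>
      show QuotientGroup.mk' (Z0 n) (ua i) * QuotientGroup.mk' (Z0 n) (ua j) = _
      rw [← map_mul, cAA, map_mul]
      rfl
    | inr j => exact comm_in_quotient (commAB_mem_Z0 i j)
  | inr i =>
    cases t with
    | inl j => exact (comm_in_quotient (commAB_mem_Z0 j i)).symm
    | inr j =>
      show QuotientGroup.mk' (Z0 n) (ub i) * QuotientGroup.mk' (Z0 n) (ub j) = _
      rw [← map_mul, cBB, map_mul]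
      rfl

lemma qgen_top : Subgroup.closure (Set.range (qgen n)) = ⊤ := by
  rw [eq_top_iff]
  have h1 : (⊤ : Subgroup (U n ⧸ Z0 n)) =
      Subgroup.map (QuotientGroup.mk' (Z0 n)) ⊤ :=
    (Subgroup.map_top_of_surjective _ (QuotientGroup.mk'_surjective _)).symm
  rw [h1, show Subgroup.map (QuotientGroup.mk' (Z0 n)) ⊤ = Subgroup.map (QuotientGroup.mk' (Z0 n))
      (Subgroup.closure (Set.range (PresentedGroup.of : Gen n → U n))) from congrArg _ gen_U.symm,
    MonoidHom.map_closure, Subgroup.closure_le]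
  rintro x ⟨y, ⟨gen, rfl⟩, rfl⟩
  rw [SetLike.mem_coe]
  cases gen with
  | a i =>
    rw [of_eq_ua]
    exact Subgroup.subset_closure ⟨Sum.inl i, rfl⟩
  | b i =>
    rw [of_eq_ub]
    exact Subgroup.subset_closure ⟨Sum.inr i, rfl⟩
  | c j =>
    rw [of_eq_uc, mk'_eq_one_of_mem (uc_mem_Z0 j)]
    exact Subgroup.one_mem _

lemma finite_quot : Finite (U n ⧸ Z0 n) := by
  have h := (card_closure_range_le (qgen n) qgen_sq qgen_comm).1
  rw [qgen_top] at h
  exact Finite.of_equiv _ Subgroup.topEquiv.toEquiv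

lemma card_quot_le : Nat.card (U n ⧸ Z0 n) ≤ 2 ^ (n + n) := by
  have h := (card_closure_range_le (qgen n) qgen_sq qgen_comm).2
  rw [qgen_top] at h
  rw [← Subgroup.card_top (G := U n ⧸ Z0 n)]
  simpa using h

instance finite_U : Finite (U n) := by
  have h1 := finite_Z0 (n := n)
  have h2 := finite_quot (n := n)
  exact Finite.of_equiv _ (Subgroup.groupEquivQuotientProdSubgroup (s := Z0 n)).symm

lemma card_U_le (hn : 1 ≤ n) : Nat.card (U n) ≤ 2 ^ (4 * n - 1) := by
  rw [Subgroup.card_eq_card_quotient_mul_card_subgroup (Z0 n)]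
  calc Nat.card (U n ⧸ Z0 n) * Nat.card (Z0 n) ≤ 2 ^ (n + n) * 2 ^ (n + (n - 1)) :=
      Nat.mul_le_mul card_quot_le card_Z0_le
    _ = 2 ^ (4 * n - 1) := by
      rw [← pow_add]
      congr 1
      omega

-- chunk 12 : the isomorphism
variable (n)

def Phom : U n →* MG n := PresentedGroup.toGroup (relations_hold (n := n))

variable {n}

lemma Phom_of (g : Gen n) : Phom n (PresentedGroup.of g) = fGen g :=
  PresentedGroup.toGroup.of (relations_hold (n := n))

lemma Phom_surj : Function.Surjective (Phom n) := by
  rw [← MonoidHom.range_eq_top]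
  rw [eq_top_iff, ← gen_MG, Subgroup.closure_le]
  rintro x ⟨g, rfl⟩
  rw [SetLike.mem_coe]
  exact ⟨PresentedGroup.of g, Phom_of g⟩

lemma card_U (hn : 1 ≤ n) : Nat.card (U n) = 2 ^ (4 * n - 1) := by
  apply le_antisymm (card_U_le hn)
  have h := Nat.card_le_card_of_surjective _ (Phom_surj (n := n))
  rwa [card_MG hn] at h

lemma Phom_bij (hn : 1 ≤ n) : Function.Bijective (Phom n) :=
  (Nat.bijective_iff_surjective_and_card _).mpr ⟨Phom_surj, by rw [card_U hn, card_MG hn]⟩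

noncomputable def isoUM (hn : 1 ≤ n) : U n ≃* MG n :=
  MulEquiv.ofBijective _ (Phom_bij hn)

end bound

-- chunk 13 : transfer along the isomorphism
section transfer
variable {G H : Type*} [Group G] [Group H]

lemma map_center_of_equiv (e : G ≃* H) :
    Subgroup.map (e : G →* H) (Subgroup.center G) = Subgroup.center H := by
  ext h
  simp only [Subgroup.mem_map]
  constructor
  · rintro ⟨g, hg, rfl⟩
    rw [Subgroup.mem_center_iff]
    intro x
    have hgc := Subgroup.mem_center_iff.mp hg (e.symm x)
    calc x * (e : G →* H) g = e (e.symm x * g) := by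
          simp [map_mul]
      _ = e (g * e.symm x) := by rw [← hgc]
      _ = (e : G →* H) g * x := by simp [map_mul]
  · intro hh
    refine ⟨e.symm h, ?_, by simp⟩
    rw [Subgroup.mem_center_iff]
    intro x
    apply e.injective
    simp only [map_mul, MulEquiv.apply_symm_apply]
    exact Subgroup.mem_center_iff.mp hh (e x)

lemma map_commutator_of_equiv (e : G ≃* H) :
    Subgroup.map (e : G →* H) (commutator G) = commutator H := by
  rw [commutator_def, Subgroup.map_commutator,
    Subgroup.map_top_of_surjective _ e.surjective, commutator_def]

lemma map_frattini_of_equiv (e : G ≃* H) :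
    Subgroup.map (e : G →* H) (frattini G) = frattini H := by
  have h := OrderIso.map_radical (MulEquiv.mapSubgroup e)
  simpa [frattini, MulEquiv.mapSubgroup] using h

lemma map_omegaOne_of_equiv (e : G ≃* H) :
    Subgroup.map (e : G →* H) (omegaOne G) = omegaOne H := by
  rw [omegaOne, MonoidHom.map_closure, omegaOne]
  congr 1
  ext y
  simp only [Set.mem_image, Set.mem_setOf_eq]
  constructor
  · rintro ⟨x, hx, rfl⟩
    have := orderOf_injective (e : G →* H) e.injective x
    rw [this]
    exact hx
  · intro hy
    refine ⟨e.symm y, ?_, by simp⟩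
    have h2 := orderOf_injective (e : G →* H) e.injective (e.symm y)
    simp only [MonoidHom.coe_coe, MulEquiv.apply_symm_apply] at h2
    rw [← h2]
    exact hy

lemma mem_center_iff_map (e : G ≃* H) (u : G) :
    u ∈ Subgroup.center G ↔ e u ∈ Subgroup.center H := by
  constructor
  · intro hu
    rw [← map_center_of_equiv e]
    exact ⟨u, hu, rfl⟩
  · intro hu
    rw [← map_center_of_equiv e] at hu
    obtain ⟨g, hg, hgu⟩ := hu
    have : g = u := e.injective hgu
    rwa [← this]

end transfer


/-- for `n ≥ 1`, the group `U(n)` has order `2^(4n-1)`, is a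
non-abelian special 2-group (`U(n)' = Φ(U(n)) = Z(U(n))` is elementary abelian),
satisfies `Ω₁(U(n)) = Z(U(n))`, admits an automorphism of order 3 whose fixed
points are exactly `Z(U(n))`, and is indecomposable. -/
theorem stmt19 (n : ℕ) (hn : 1 ≤ n) :
    Nat.card (U n) = 2 ^ (4 * n - 1) ∧
    (∃ x y : U n, x * y ≠ y * x) ∧
    commutator (U n) = frattini (U n) ∧
    frattini (U n) = Subgroup.center (U n) ∧
    (∀ x ∈ Subgroup.center (U n), x ^ 2 = 1) ∧
    omegaOne (U n) = Subgroup.center (U n) ∧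
    (∃ φ : MulAut (U n), orderOf φ = 3 ∧
      ∀ x : U n, φ x = x ↔ x ∈ Subgroup.center (U n)) ∧
    (∀ A B : Subgroup (U n), A ⊓ B = ⊥ →
      (∀ a ∈ A, ∀ b ∈ B, a * b = b * a) → A ⊔ B = ⊤ →
      A = ⊥ ∨ B = ⊥) := by
  have e : U n ≃* MG n := isoUM hn
  have hinj : Function.Injective (MulEquiv.mapSubgroup e) := (MulEquiv.mapSubgroup e).injective
  have hmapSub : ∀ X : Subgroup (U n), MulEquiv.mapSubgroup e X = Subgroup.map (e : U n →* MG n) X :=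
    fun X => rfl
  refine ⟨card_U hn, ?_, ?_, ?_, ?_, ?_, ?_, ?_⟩
  · -- nonabelian
    obtain ⟨x, y, hxy⟩ := nonabelian (n := n) hn
    refine ⟨e.symm x, e.symm y, fun h => hxy ?_⟩
    have := congrArg e h
    simpa [map_mul] using this
  · -- commutator = frattini
    apply hinj
    rw [hmapSub, hmapSub, map_commutator_of_equiv, map_frattini_of_equiv,
      commutator_eq_center, frattini_eq_center]
  · -- frattini = center
    apply hinj
    rw [hmapSub, hmapSub, map_frattini_of_equiv, map_center_of_equiv, frattini_eq_center]
  · -- elementary abelian center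
    intro x hx
    have h1 : e x ∈ Subgroup.center (MG n) := (mem_center_iff_map e x).mp hx
    have h2 : e (x ^ 2) = 1 := by
      rw [map_pow]
      exact central_sq h1
    have := congrArg e.symm h2
    simpa using this
  · -- omegaOne = center
    apply hinj
    rw [hmapSub, hmapSub, map_omegaOne_of_equiv, map_center_of_equiv, omegaOne_eq_center]
  · -- automorphism of order 3
    refine ⟨(e.trans phiM).trans e.symm, ?_, ?_⟩
    · have happly : ∀ u : U n, ((e.trans phiM).trans e.symm) u = e.symm (auF (e u)) :=
        fun u => rfl
      have hcube : ((e.trans phiM).trans e.symm) ^ 3 = 1 := by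
        apply DFunLike.ext
        intro u
        rw [pow_succ, pow_succ, pow_one, MulAut.mul_apply, MulAut.mul_apply,
          happly, happly, happly]
        simp only [MulEquiv.apply_symm_apply]
        rw [auF3]
        simp
      have hne : ((e.trans phiM).trans e.symm) ≠ 1 := by
        intro h
        have h1 : ((e.trans phiM).trans e.symm) (e.symm (mA ⟨0, hn⟩)) = e.symm (mA ⟨0, hn⟩) := by
          rw [h]; rfl
        have h2 : e.symm (auF (mA ⟨0, hn⟩)) = e.symm (mA ⟨0, hn⟩) := by
          have h3 : ((e.trans phiM).trans e.symm) (e.symm (mA ⟨0, hn⟩)) =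
              e.symm (auF (e (e.symm (mA ⟨0, hn⟩)))) := rfl
          rw [h3, MulEquiv.apply_symm_apply] at h1
          exact h1
        have h4 : auF (mA ⟨0, hn⟩) = mA ⟨0, hn⟩ := e.symm.injective h2
        have h5 := congrFun (congrArg MG.x h4) ⟨0, hn⟩
        simp [auF, mA] at h5
      exact orderOf_eq_prime hcube hne
    · intro u
      have happly : ((e.trans phiM).trans e.symm) u = e.symm (phiM (e u)) := rfl
      rw [happly]
      rw [MulEquiv.symm_apply_eq]
      rw [phiM_fixed (e u)]
      exact (mem_center_iff_map e u).symm
  · -- indecomposable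
    intro A B hinf hcomm hsup
    have hinf' : (MulEquiv.mapSubgroup e A) ⊓ (MulEquiv.mapSubgroup e B) = ⊥ := by
      rw [← OrderIso.map_inf, hinf]
      exact OrderIso.map_bot _
    have hsup' : (MulEquiv.mapSubgroup e A) ⊔ (MulEquiv.mapSubgroup e B) = ⊤ := by
      rw [← OrderIso.map_sup, hsup]
      exact OrderIso.map_top _
    have hcomm' : ∀ a ∈ MulEquiv.mapSubgroup e A, ∀ b ∈ MulEquiv.mapSubgroup e B,
        a * b = b * a := by
      rintro a' ha' b' hb'
      rw [hmapSub] at ha' hb'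
      obtain ⟨a, ha, rfl⟩ := ha'
      obtain ⟨b, hb, rfl⟩ := hb'
      have := hcomm a ha b hb
      simp only [MonoidHom.coe_coe]
      rw [← map_mul, ← map_mul, this]
    rcases indecomposable hn hinf' hcomm' hsup' with h | h
    · left
      apply hinj
      rw [h, ← OrderIso.map_bot (MulEquiv.mapSubgroup e)]
    · right
      apply hinj
      rw [h, ← OrderIso.map_bot (MulEquiv.mapSubgroup e)]


end Stmt19
end
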